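/- arXiv:1104.2172 — 3 statements merged into one kernel-verified Lean document; each statement's English description precedes it below -/
import Mathlib

section
/- Let Λ ⊆ ℤ be a sampling sequence for PW_S with lower bound B ≤ 1: B‖f‖² ≤ Σ_{λ∈Λ}|f(λ)|² for all f ∈ PW_S. Then for every finite trigonometric polynomial P(t) = Σ_{γ∈ℤ∖Λ} a_γ e^{iγt} (finitely supported coefficients), one has (B/2)·Σ|a_γ|² ≤ ‖P‖²_{L²([0,2π]∖S)}. -/
set_option maxHeartbeats 1000000
open MeasureTheory Set Complex ENNReal NNReal
noncomputable section

local notation "π" => Real.pi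

lemma fourier_eq (n : ℤ) (x : ℝ) :
    @fourier (2*π) n (x : AddCircle (2*π)) = Complex.exp (Complex.I * n * x) := by
  rw [fourier_coe_apply]
  congr 1
  have : (2*π : ℂ) ≠ 0 := by simp [Real.pi_ne_zero]
  field_simp; push_cast; ring

lemma parseval_aux (h : ℝ → ℂ) (hm : Measurable h) (C : ℝ) (hb : ∀ t, ‖h t‖ ≤ C) :
    Summable (fun n : ℤ => ‖∫ t in Ioc 0 (2*π), Complex.exp (Complex.I * n * t) * h t‖^2) ∧
    ∑' n : ℤ, ‖∫ t in Ioc 0 (2*π), Complex.exp (Complex.I * n * t) * h t‖^2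
      = (2*π) * ∫ t in Ioc 0 (2*π), ‖h t‖^2 := by
  haveI : Fact (0 < 2*π) := ⟨by positivity⟩
  have hT0 : (0:ℝ) < 2*π := by positivity
  set H : AddCircle (2*π) → ℂ := AddCircle.liftIoc (2*π) 0 h with hH
  have hHm : Measurable H := by
    have : H = (fun x : Ioc (0:ℝ) (0+2*π) => h x) ∘ (AddCircle.measurableEquivIoc (2*π) 0) := rfl
    rw [this]
    exact (hm.comp measurable_subtype_coe).comp (AddCircle.measurableEquivIoc (2*π) 0).measurable
  have hHb : ∀ x, ‖H x‖ ≤ C := by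
    intro x
    rcases Quotient.exists_rep x with ⟨y, rfl⟩
    exact hb _
  have hmem : MemLp H 2 (@AddCircle.haarAddCircle (2*π) _) := by
    refine MemLp.mono_exponent (q := ⊤) ?_ le_top
    exact memLp_top_of_bound hHm.aestronglyMeasurable C (ae_of_all _ hHb)
  set L := hmem.toLp H with hL
  have hcoeff : ∀ n : ℤ, fourierCoeff (⇑L) n = fourierCoeff H n := by
    intro n
    apply integral_congr_ae
    filter_upwards [hmem.coeFn_toLp] with x hx
    rw [hx]
  have key := tsum_sq_fourierCoeff L
  -- compute fourierCoeff H (-n)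
  have hcn : ∀ n : ℤ, fourierCoeff H (-n)
      = (1/(2*π)) • ∫ t in Ioc 0 (2*π), Complex.exp (Complex.I * n * t) * h t := by
    intro n
    rw [fourierCoeff_eq_intervalIntegral H (-n) 0,
      intervalIntegral.integral_of_le (by linarith : (0:ℝ) ≤ 0 + 2*π), zero_add]
    congr 1
    apply setIntegral_congr_fun measurableSet_Ioc
    intro x hx
    simp only [neg_neg, smul_eq_mul]
    rw [hH]
    rw [AddCircle.liftIoc_coe_apply (by simpa using hx)]
    congr 1
    exact fourier_eq n x
  have hcn' : ∀ n : ℤ, ∫ t in Ioc 0 (2*π), Complex.exp (Complex.I * n * t) * h t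
      = (2*π : ℝ) • fourierCoeff H (-n) := by
    intro n
    rw [hcn n, smul_smul, mul_one_div, div_self (by positivity : (2*π:ℝ) ≠ 0), one_smul]
  have hnorm : ∀ n : ℤ, ‖∫ t in Ioc 0 (2*π), Complex.exp (Complex.I * n * t) * h t‖^2
      = (2*π)^2 * ‖fourierCoeff H (-n)‖^2 := by
    intro n
    rw [hcn' n, norm_smul, mul_pow]
    congr 2
    rw [Real.norm_eq_abs, abs_of_pos hT0]
  have hsumL : Summable fun i : ℤ => ‖fourierCoeff (⇑L) i‖ ^ 2 := by
    have h1 := lp.memℓp (fourierBasis.repr L)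
    rw [memℓp_gen_iff (by norm_num : 0 < (2:ℝ≥0∞).toReal)] at h1
    have : ∀ i : ℤ, ‖(fourierBasis.repr L) i‖ ^ (2:ℝ≥0∞).toReal = ‖fourierCoeff (⇑L) i‖ ^ 2 := by
      intro i
      rw [fourierBasis_repr]
      norm_num [Real.rpow_natCast]
    exact Summable.congr h1 this
  have hsumH : Summable fun i : ℤ => ‖fourierCoeff H i‖ ^ 2 := by
    refine hsumL.congr fun i => ?_
    rw [hcoeff i]
  constructor
  · refine Summable.congr (((hsumH.comp_injective (neg_injective)).mul_left ((2*π)^2))) ?_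
    intro n
    simp only [Function.comp_apply]
    exact (hnorm n).symm
  · have e1 : ∑' n : ℤ, ‖∫ t in Ioc 0 (2*π), Complex.exp (Complex.I * n * t) * h t‖^2
        = (2*π)^2 * ∑' n : ℤ, ‖fourierCoeff H (-n)‖^2 := by
      rw [← _root_.tsum_mul_left]
      exact tsum_congr hnorm
    have e2 : ∑' n : ℤ, ‖fourierCoeff H (-n)‖^2 = ∑' n : ℤ, ‖fourierCoeff H n‖^2 :=
      (Equiv.neg ℤ).tsum_eq (fun n => ‖fourierCoeff H n‖^2)
    have e3 : ∑' n : ℤ, ‖fourierCoeff H n‖^2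
        = ∫ t : AddCircle (2*π), ‖H t‖^2 ∂AddCircle.haarAddCircle := by
      have ec : ∑' n : ℤ, ‖fourierCoeff H n‖^2 = ∑' i : ℤ, ‖fourierCoeff (⇑L) i‖^2 :=
        tsum_congr (fun n => by rw [hcoeff n])
      rw [ec, key]
      apply integral_congr_ae
      filter_upwards [hmem.coeFn_toLp] with x hx
      rw [hx]
    have e4 : ∫ t : AddCircle (2*π), ‖H t‖^2 ∂AddCircle.haarAddCircle
        = (1/(2*π)) * ∫ t in Ioc 0 (2*π), ‖h t‖^2 := by
      have p1 := AddCircle.integral_preimage (2*π) 0 (fun b => ‖H b‖^2)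
      rw [zero_add] at p1
      have p2 : ∫ t in Ioc 0 (2*π), ‖h t‖^2 = ∫ t in Ioc 0 (2*π), ‖H (t : AddCircle (2*π))‖^2 := by
        apply setIntegral_congr_fun measurableSet_Ioc
        intro x hx
        show ‖h x‖^2 = ‖H (x : AddCircle (2*π))‖^2
        rw [hH, AddCircle.liftIoc_coe_apply (by simpa using hx)]
      rw [p2, p1, AddCircle.volume_eq_smul_haarAddCircle, integral_smul_measure,
        ENNReal.toReal_ofReal (by positivity : (0:ℝ) ≤ 2*π), smul_eq_mul, ← mul_assoc]
      rw [one_div, inv_mul_cancel₀ (by positivity : (2*π:ℝ) ≠ 0), one_mul]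
    rw [e1, e2, e3, e4]
    have : (π:ℝ) ≠ 0 := Real.pi_ne_zero
    field_simp

lemma norm_cexp_eq_one (x t : ℝ) : ‖Complex.exp (Complex.I * x * t)‖ = 1 := by
  rw [Complex.norm_exp]
  simp [Complex.mul_re]

lemma plancherel_aux (g : ℝ → ℂ) (hm : Measurable g) (C : ℝ)
    (hb : ∀ t, ‖g t‖ ≤ C) (hsupp : ∀ t, t ∉ Ioc 0 (2*π) → g t = 0) :
    ∫ x : ℝ, ‖∫ t : ℝ, Complex.exp (Complex.I * x * t) * g t‖^2
      = (2*π) * ∫ t in Ioc 0 (2*π), ‖g t‖^2 := by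
  have hT0 : (0:ℝ) < 2*π := by positivity
  set f : ℝ → ℂ := fun x => ∫ t : ℝ, Complex.exp (Complex.I * x * t) * g t with hf
  have hfIoc : ∀ x : ℝ, f x = ∫ t in Ioc 0 (2*π), Complex.exp (Complex.I * x * t) * g t := by
    intro x
    rw [hf]
    exact (setIntegral_eq_integral_of_forall_compl_eq_zero
      (fun t ht => by rw [hsupp t ht, mul_zero])).symm
  have hmeasF : ∀ x : ℝ, Measurable fun t : ℝ => Complex.exp (Complex.I * x * t) * g t := by
    intro x
    exact (Complex.measurable_exp.comp ((measurable_const.mul Complex.measurable_ofReal))).mul hm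
  have hcont : Continuous f := by
    rw [hf]
    apply continuous_of_dominated (bound := (Ioc (0:ℝ) (2*π)).indicator fun _ => C)
    · exact fun x => (hmeasF x).aestronglyMeasurable
    · intro x
      filter_upwards with t
      by_cases ht : t ∈ Ioc (0:ℝ) (2*π)
      · rw [indicator_of_mem ht, norm_mul, norm_cexp_eq_one, one_mul]
        exact hb t
      · rw [indicator_of_notMem ht, hsupp t ht, mul_zero, norm_zero]
    · rw [integrable_indicator_iff measurableSet_Ioc]
      exact integrableOn_const (by rw [Real.volume_Ioc]; exact ENNReal.ofReal_lt_top.ne)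
    · filter_upwards with t
      have hc : Continuous fun x : ℝ => Complex.I * (x:ℂ) * (t:ℂ) := by
        exact (continuous_const.mul Complex.continuous_ofReal).mul continuous_const
      exact (Complex.continuous_exp.comp hc).mul continuous_const
  have key : ∀ s : ℝ, Summable (fun n : ℤ => ‖f ((n:ℝ) + s)‖^2) ∧
      ∑' n : ℤ, ‖f ((n:ℝ) + s)‖^2 = (2*π) * ∫ t in Ioc 0 (2*π), ‖g t‖^2 := by
    intro s
    have hp := parseval_aux (fun t => Complex.exp (Complex.I * s * t) * g t)
      ((Complex.measurable_exp.comp ((measurable_const.mul Complex.measurable_ofReal))).mul hm)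
      C (fun t => by rw [norm_mul, norm_cexp_eq_one, one_mul]; exact hb t)
    have hid : ∀ n : ℤ, (∫ t in Ioc 0 (2*π),
        Complex.exp (Complex.I * n * t) * (Complex.exp (Complex.I * s * t) * g t)) = f ((n:ℝ) + s) := by
      intro n
      rw [hfIoc]
      apply setIntegral_congr_fun measurableSet_Ioc
      intro t _
      show Complex.exp (Complex.I * n * t) * (Complex.exp (Complex.I * s * t) * g t)
        = Complex.exp (Complex.I * ((n:ℝ) + s : ℝ) * t) * g t
      rw [← mul_assoc, ← Complex.exp_add]
      congr 2
      push_cast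
      ring
    have hg2 : (∫ t in Ioc 0 (2*π), ‖Complex.exp (Complex.I * s * t) * g t‖^2)
        = ∫ t in Ioc 0 (2*π), ‖g t‖^2 := by
      apply setIntegral_congr_fun measurableSet_Ioc
      intro t _
      show ‖Complex.exp (Complex.I * s * t) * g t‖^2 = ‖g t‖^2
      rw [norm_mul, norm_cexp_eq_one, one_mul]
    constructor
    · exact hp.1.congr fun n => by rw [hid n]
    · rw [← hg2, ← hp.2]
      exact (tsum_congr fun n => by rw [hid n]).symm
  set V : ℝ := (2*π) * ∫ t in Ioc 0 (2*π), ‖g t‖^2 with hV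
  have hV0 : 0 ≤ V := by
    apply mul_nonneg (by positivity)
    exact setIntegral_nonneg measurableSet_Ioc fun t _ => by positivity
  have hFm : Measurable fun x : ℝ => ENNReal.ofReal (‖f x‖^2) :=
    (ENNReal.measurable_ofReal.comp ((hcont.norm.pow 2).measurable))
  have hlin : ∫⁻ x : ℝ, ENNReal.ofReal (‖f x‖^2) = ENNReal.ofReal V := by
    set F : ℝ → ℝ≥0∞ := fun x => ENNReal.ofReal (‖f x‖^2) with hFdef
    have h1 : ∫⁻ x : ℝ, F x = ∑' n : ℤ, ∫⁻ x in Ioc (n:ℝ) (n+1), F x := by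
      rw [← lintegral_iUnion (fun n : ℤ => measurableSet_Ioc)
        (pairwise_disjoint_Ioc_intCast ℝ) F, iUnion_Ioc_intCast, Measure.restrict_univ]
    have h2 : ∀ n : ℤ, ∫⁻ x in Ioc (n:ℝ) (n+1), F x = ∫⁻ s in Ioc (0:ℝ) 1, F (s + n) := by
      intro n
      rw [← lintegral_indicator measurableSet_Ioc, ← lintegral_indicator measurableSet_Ioc]
      rw [← (measurePreserving_add_right volume (n:ℝ)).lintegral_comp
        ((hFm.indicator measurableSet_Ioc))]
      congr 1
      funext s
      by_cases hs : s ∈ Ioc (0:ℝ) 1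
      · rw [indicator_of_mem hs, indicator_of_mem]
        simp only [mem_Ioc] at hs ⊢
        constructor <;> linarith [hs.1, hs.2]
      · rw [indicator_of_notMem hs, indicator_of_notMem]
        simp only [mem_Ioc] at hs ⊢
        intro hc
        exact hs ⟨by linarith [hc.1], by linarith [hc.2]⟩
    have h3 : ∫⁻ x : ℝ, F x = ∫⁻ s in Ioc (0:ℝ) 1, ∑' n : ℤ, F (s + n) := by
      rw [h1]
      simp_rw [h2]
      rw [← lintegral_tsum]
      intro n
      exact (hFm.comp (measurable_add_const _)).aemeasurable
    have h4 : ∀ s : ℝ, ∑' n : ℤ, F (s + n) = ENNReal.ofReal V := by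
      intro s
      have := (key s)
      have e : ∀ n : ℤ, F (s + n) = ENNReal.ofReal (‖f ((n:ℝ) + s)‖^2) := by
        intro n; rw [hFdef]; norm_num [add_comm]
      calc ∑' n : ℤ, F (s + n) = ∑' n : ℤ, ENNReal.ofReal (‖f ((n:ℝ) + s)‖^2) :=
            tsum_congr e
        _ = ENNReal.ofReal (∑' n : ℤ, ‖f ((n:ℝ) + s)‖^2) :=
            (ENNReal.ofReal_tsum_of_nonneg (fun n => by positivity) this.1).symm
        _ = ENNReal.ofReal V := by rw [this.2]
    rw [h3]
    simp_rw [h4]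
    rw [setLIntegral_const, Real.volume_Ioc]
    norm_num
  have hnn : (0:ℝ→ℝ) ≤ᵐ[volume] fun x => ‖f x‖^2 := ae_of_all _ fun x => by positivity
  rw [show (∫ x : ℝ, ‖∫ t : ℝ, Complex.exp (Complex.I * x * t) * g t‖^2) = ∫ x : ℝ, ‖f x‖^2 from rfl]
  rw [integral_eq_lintegral_of_nonneg_ae hnn (hcont.norm.pow 2).aestronglyMeasurable]
  rw [hlin, ENNReal.toReal_ofReal hV0]

lemma orth {m : ℤ} (hm : m ≠ 0) :
    ∫ t in Ioc 0 (2*π), Complex.exp (Complex.I * m * t) = 0 := by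
  have h1 : (Complex.I * (m:ℂ)) ≠ 0 :=
    mul_ne_zero Complex.I_ne_zero (by exact_mod_cast hm)
  rw [← intervalIntegral.integral_of_le (by positivity : (0:ℝ) ≤ 2*π)]
  rw [integral_exp_mul_complex h1]
  have h2 : Complex.I * (m:ℂ) * ((2*π:ℝ):ℂ) = (m:ℤ) * (2*Real.pi*Complex.I) := by
    push_cast; ring
  rw [h2, Complex.exp_int_mul_two_pi_mul_I]
  norm_num

lemma trig_int (F : Finset ℤ) (a : ℤ → ℂ) (n : ℤ) :
    (∫ t in Ioc 0 (2*π), Complex.exp (Complex.I * n * t) *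
      (starRingEnd ℂ) (∑ γ ∈ F, a γ * Complex.exp (Complex.I * γ * t)))
    = if n ∈ F then ((2*π:ℝ):ℂ) * (starRingEnd ℂ) (a n) else 0 := by
  have hptwise : ∀ γ : ℤ, ∀ t : ℝ,
      Complex.exp (Complex.I * n * t) * (starRingEnd ℂ) (a γ * Complex.exp (Complex.I * γ * t))
      = (starRingEnd ℂ) (a γ) * Complex.exp (Complex.I * ((n:ℂ) - (γ:ℂ)) * t) := by
    intro γ t
    rw [map_mul, ← Complex.exp_conj]
    have : (starRingEnd ℂ) (Complex.I * γ * t) = -(Complex.I * γ * t) := by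
      simp [map_mul, Complex.conj_I, Complex.conj_ofReal]
    rw [this]
    rw [show Complex.I * ((n:ℂ) - (γ:ℂ)) * (t:ℂ)
        = Complex.I * n * t + -(Complex.I * γ * t) by ring, Complex.exp_add]
    ring
  have hstep : (∫ t in Ioc 0 (2*π), Complex.exp (Complex.I * n * t) *
      (starRingEnd ℂ) (∑ γ ∈ F, a γ * Complex.exp (Complex.I * γ * t)))
      = ∑ γ ∈ F, (starRingEnd ℂ) (a γ) * ∫ t in Ioc 0 (2*π),
          Complex.exp (Complex.I * ((n:ℂ) - (γ:ℂ)) * t) := by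
    have : (∫ t in Ioc 0 (2*π), Complex.exp (Complex.I * n * t) *
        (starRingEnd ℂ) (∑ γ ∈ F, a γ * Complex.exp (Complex.I * γ * t)))
        = ∫ t in Ioc 0 (2*π), ∑ γ ∈ F,
            (starRingEnd ℂ) (a γ) * Complex.exp (Complex.I * ((n:ℂ) - (γ:ℂ)) * t) := by
      apply setIntegral_congr_fun measurableSet_Ioc
      intro t _
      show Complex.exp (Complex.I * n * t) * (starRingEnd ℂ) (∑ γ ∈ F, _) = _
      rw [map_sum, Finset.mul_sum]
      exact Finset.sum_congr rfl fun γ _ => hptwise γ t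
    rw [this, integral_finset_sum]
    · exact Finset.sum_congr rfl fun γ _ => integral_const_mul _ _
    · intro γ _
      apply Continuous.integrableOn_Ioc
      have : Continuous fun t : ℝ => Complex.I * ((n:ℂ) - (γ:ℂ)) * (t:ℂ) :=
        continuous_const.mul Complex.continuous_ofReal
      exact continuous_const.mul (Complex.continuous_exp.comp this)
  rw [hstep]
  have hterm : ∀ γ ∈ F, (starRingEnd ℂ) (a γ) * (∫ t in Ioc 0 (2*π),
      Complex.exp (Complex.I * ((n:ℂ) - (γ:ℂ)) * t))
      = if γ = n then ((2*π:ℝ):ℂ) * (starRingEnd ℂ) (a γ) else 0 := by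
    intro γ _
    by_cases hγ : γ = n
    · subst hγ
      simp only [sub_self, mul_zero, zero_mul, Complex.exp_zero, if_true]
      rw [setIntegral_const, Real.volume_real_Ioc_of_le (by positivity : (0:ℝ) ≤ 2*π)]
      simp only [sub_zero, ENNReal.toReal_ofReal (by positivity : (0:ℝ) ≤ 2*π)]
      rw [real_smul]
      ring
    · have hne : n - γ ≠ 0 := sub_ne_zero.2 (Ne.symm hγ)
      have ho := orth hne
      push_cast at ho
      rw [if_neg hγ, ho, mul_zero]
  rw [Finset.sum_congr rfl hterm, Finset.sum_ite_eq' F n fun γ => ((2*π:ℝ):ℂ) * (starRingEnd ℂ) (a γ)]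

lemma setint_indicator_mul (W : Set ℝ) (hWm : MeasurableSet W) (hWs : W ⊆ Ioc 0 (2*π))
    (c q : ℝ → ℂ) :
    ∫ t in Ioc 0 (2*π), c t * W.indicator q t = ∫ t in W, c t * q t := by
  have h : ∀ t, c t * W.indicator q t = W.indicator (fun t => c t * q t) t := by
    intro t; by_cases ht : t ∈ W
    · rw [indicator_of_mem ht, indicator_of_mem ht]
    · rw [indicator_of_notMem ht, indicator_of_notMem ht, mul_zero]
  rw [setIntegral_congr_fun measurableSet_Ioc (fun t _ => h t), setIntegral_indicator hWm,
    inter_eq_self_of_subset_right hWs]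

lemma setint_indicator_norm (W : Set ℝ) (hWm : MeasurableSet W) (hWs : W ⊆ Ioc 0 (2*π))
    (q : ℝ → ℂ) :
    ∫ t in Ioc 0 (2*π), ‖W.indicator q t‖^2 = ∫ t in W, ‖q t‖^2 := by
  have h : ∀ t, ‖W.indicator q t‖^2 = W.indicator (fun t => ‖q t‖^2) t := by
    intro t; by_cases ht : t ∈ W
    · rw [indicator_of_mem ht, indicator_of_mem ht]
    · rw [indicator_of_notMem ht, indicator_of_notMem ht, norm_zero]; norm_num
  rw [setIntegral_congr_fun measurableSet_Ioc (fun t _ => h t), setIntegral_indicator hWm,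
    inter_eq_self_of_subset_right hWs]

def IsPW (S : Set ℝ) (f : ℝ → ℂ) : Prop :=
  ∃ g : ℝ → ℂ, Integrable g ∧ MemLp g 2 ∧ (∀ t, t ∉ S → g t = 0) ∧
    ∀ x : ℝ, f x = ∫ t : ℝ, Complex.exp (Complex.I * x * t) * g t

/-- if `Λ` is sampling for `PW_S` with bound `B ≤ 1`, then every trig
polynomial with frequencies in `ℤ∖Λ` satisfies the lower Riesz bound `B/2` on
`L²([0,2π]∖S)` (normalized measure). -/
theorem stmt_5 (S : Set ℝ) (hS : S ⊆ Set.Icc 0 (2 * Real.pi)) (hmeas : MeasurableSet S)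
    (Λ : Set ℤ) (B : ℝ) (hB : 0 < B) (hB1 : B ≤ 1)
    (hsamp : ∀ f : ℝ → ℂ, IsPW S f →
      B * ∫ x : ℝ, ‖f x‖ ^ 2 ≤ ∑' l : Λ, ‖f ((l : ℤ) : ℝ)‖ ^ 2) :
    ∀ (F : Finset ℤ), (∀ γ ∈ F, γ ∉ Λ) → ∀ a : ℤ → ℂ,
      (B / 2) * ∑ γ ∈ F, ‖a γ‖ ^ 2 ≤
        (1 / (2 * Real.pi)) *
          ∫ t in Set.Icc 0 (2 * Real.pi) \ S,
            ‖∑ γ ∈ F, a γ * Complex.exp (Complex.I * γ * t)‖ ^ 2 := by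
  intro F hF a
  have hπ : (0:ℝ) < 2*π := by positivity
  set P : ℝ → ℂ := fun t : ℝ => ∑ γ ∈ F, a γ * Complex.exp (Complex.I * γ * t) with hPdef
  have hPc : Continuous P := by
    apply continuous_finset_sum
    intro γ _
    exact continuous_const.mul (Complex.continuous_exp.comp
      (continuous_const.mul Complex.continuous_ofReal))
  have hconjc : Continuous fun t : ℝ => (starRingEnd ℂ) (P t) := continuous_star.comp hPc
  set CP : ℝ := ∑ γ ∈ F, ‖a γ‖ with hCP
  have hPb : ∀ t : ℝ, ‖P t‖ ≤ CP := by
    intro t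
    refine (norm_sum_le _ _).trans ?_
    apply Finset.sum_le_sum
    intro γ _
    rw [norm_mul]
    have h1 : ‖Complex.exp (Complex.I * γ * t)‖ = 1 := by
      rw [Complex.norm_exp]
      simp [Complex.mul_re]
    rw [h1, mul_one]
  have hPb' : ∀ t : ℝ, ‖(starRingEnd ℂ) (P t)‖ ≤ CP := fun t => by
    rw [RCLike.norm_conj]; exact hPb t
  set E : Set ℝ := S ∩ Ioc 0 (2*π) with hE
  set D : Set ℝ := Ioc 0 (2*π) \ S with hD
  have hEm : MeasurableSet E := hmeas.inter measurableSet_Ioc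
  have hDm : MeasurableSet D := measurableSet_Ioc.diff hmeas
  have hEsub : E ⊆ Ioc 0 (2*π) := inter_subset_right
  have hDsub : D ⊆ Ioc 0 (2*π) := diff_subset
  have hdisj : Disjoint E D := by
    rw [disjoint_left]
    intro x hx hx'
    exact hx'.2 hx.1
  have hunion : E ∪ D = Ioc 0 (2*π) := by
    rw [hE, hD]
    ext x
    simp only [mem_union, mem_inter_iff, mem_diff, mem_Ioc]
    tauto
  set g : ℝ → ℂ := E.indicator (fun t => (starRingEnd ℂ) (P t)) with hgdef
  have hgm : Measurable g := hconjc.measurable.indicator hEm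
  have hgb : ∀ t, ‖g t‖ ≤ CP := by
    intro t
    by_cases ht : t ∈ E
    · rw [hgdef, indicator_of_mem ht]; exact hPb' t
    · rw [hgdef, indicator_of_notMem ht, norm_zero]
      exact Finset.sum_nonneg fun γ _ => norm_nonneg _
  have hgIoc : ∀ t, t ∉ Ioc 0 (2*π) → g t = 0 := fun t ht =>
    indicator_of_notMem (fun hmem => ht (hEsub hmem)) _
  set f0 : ℝ → ℂ := fun x : ℝ => ∫ t : ℝ, Complex.exp (Complex.I * x * t) * g t with hf0
  have hEfin : volume E < ⊤ :=
    lt_of_le_of_lt (measure_mono hEsub) (by rw [Real.volume_Ioc]; exact ENNReal.ofReal_lt_top)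
  have hPW : IsPW S f0 := by
    refine ⟨g, ?_, ?_, ?_, fun x => rfl⟩
    · rw [hgdef, integrable_indicator_iff hEm]
      exact (hconjc.integrableOn_Ioc).mono_set hEsub
    · rw [hgdef, memLp_indicator_iff_restrict hEm]
      haveI : IsFiniteMeasure (volume.restrict E) :=
        ⟨by rw [Measure.restrict_apply_univ]; exact hEfin⟩
      exact MemLp.mono_exponent
        (memLp_top_of_bound hconjc.aestronglyMeasurable CP (ae_of_all _ hPb')) le_top
    · intro t ht
      exact indicator_of_notMem (fun hmem => ht hmem.1) _
  have hsampf := hsamp f0 hPW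
  -- LHS via Plancherel
  have hPl : ∫ x : ℝ, ‖f0 x‖^2 = (2*π) * ∫ t in E, ‖P t‖^2 := by
    rw [hf0]
    rw [plancherel_aux g hgm CP hgb hgIoc]
    congr 1
    have := setint_indicator_norm E hEm hEsub (fun t => (starRingEnd ℂ) (P t))
    rw [hgdef, this]
    exact setIntegral_congr_fun hEm fun t _ => by rw [RCLike.norm_conj]
  -- sample values
  have hfl : ∀ l : ℤ, l ∉ F →
      f0 l = -∫ t in D, Complex.exp (Complex.I * l * t) * (starRingEnd ℂ) (P t) := by
    intro l hl
    have h1 : f0 l = ∫ t in Ioc 0 (2*π), Complex.exp (Complex.I * l * t) * g t := by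
      rw [hf0]
      exact (setIntegral_eq_integral_of_forall_compl_eq_zero
        (fun t ht => by rw [hgIoc t ht, mul_zero])).symm
    have h2 : (∫ t in Ioc 0 (2*π), Complex.exp (Complex.I * l * t) * g t)
        = ∫ t in E, Complex.exp (Complex.I * l * t) * (starRingEnd ℂ) (P t) := by
      rw [hgdef]
      exact setint_indicator_mul E hEm hEsub _ _
    have h3 : (∫ t in E, Complex.exp (Complex.I * l * t) * (starRingEnd ℂ) (P t))
        + ∫ t in D, Complex.exp (Complex.I * l * t) * (starRingEnd ℂ) (P t) = 0 := by
      have hcl : Continuous fun t : ℝ => Complex.exp (Complex.I * l * t) * (starRingEnd ℂ) (P t) :=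
        (Complex.continuous_exp.comp (continuous_const.mul Complex.continuous_ofReal)).mul hconjc
      rw [← setIntegral_union hdisj hDm
        ((hcl.integrableOn_Ioc).mono_set hEsub) ((hcl.integrableOn_Ioc).mono_set hDsub), hunion]
      have := trig_int F a l
      rw [hPdef]
      simp only []
      rw [this, if_neg hl]
    rw [h1, h2]
    exact eq_neg_of_add_eq_zero_left h3
  -- Parseval on D
  set gD : ℝ → ℂ := D.indicator (fun t => (starRingEnd ℂ) (P t)) with hgDdef
  have hgDm : Measurable gD := hconjc.measurable.indicator hDm
  have hgDb : ∀ t, ‖gD t‖ ≤ CP := by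
    intro t
    by_cases ht : t ∈ D
    · rw [hgDdef, indicator_of_mem ht]; exact hPb' t
    · rw [hgDdef, indicator_of_notMem ht, norm_zero]
      exact Finset.sum_nonneg fun γ _ => norm_nonneg _
  have hpD := parseval_aux gD hgDm CP hgDb
  have hidD : ∀ n : ℤ, (∫ t in Ioc 0 (2*π), Complex.exp (Complex.I * n * t) * gD t)
      = ∫ t in D, Complex.exp (Complex.I * n * t) * (starRingEnd ℂ) (P t) := by
    intro n
    rw [hgDdef]
    exact setint_indicator_mul D hDm hDsub _ _
  have hnD : ∫ t in Ioc 0 (2*π), ‖gD t‖^2 = ∫ t in D, ‖P t‖^2 := by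
    rw [hgDdef, setint_indicator_norm D hDm hDsub]
    exact setIntegral_congr_fun hDm fun t _ => by rw [RCLike.norm_conj]
  -- bound the sample sum
  have hBoundD : (∑' l : Λ, ‖f0 ((l:ℤ):ℝ)‖^2) ≤ (2*π) * ∫ t in D, ‖P t‖^2 := by
    set c : ℤ → ℝ := fun n : ℤ =>
      ‖∫ t in Ioc 0 (2*π), Complex.exp (Complex.I * n * t) * gD t‖^2 with hcdef
    have hcnn : ∀ n, 0 ≤ c n := fun n => by rw [hcdef]; positivity
    have hc : ∀ l : Λ, ‖f0 (((l:ℤ)):ℝ)‖^2 = c ((l:ℤ)) := by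
      intro l
      have hlF : ((l:ℤ)) ∉ F := fun hlf => hF _ hlf l.2
      rw [hfl _ hlF, norm_neg, hcdef]
      show _ = ‖∫ t in Ioc 0 (2*π), Complex.exp (Complex.I * ((l:ℤ)) * t) * gD t‖^2
      rw [hidD]
    calc (∑' l : Λ, ‖f0 ((l:ℤ):ℝ)‖^2)
        = ∑' l : Λ, c ((l:ℤ)) := tsum_congr hc
      _ ≤ ∑' n : ℤ, c n :=
          Summable.tsum_le_tsum_of_inj ((↑) : Λ → ℤ) Subtype.val_injective
            (fun n _ => hcnn n) (fun l => le_rfl) (hpD.1.subtype Λ) hpD.1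
      _ = (2*π) * ∫ t in D, ‖P t‖^2 := by rw [hcdef, hpD.2, hnD]
  -- total Parseval
  have hpT := parseval_aux (fun t => (starRingEnd ℂ) (P t)) (hconjc.measurable) CP hPb'
  have hTot : (∫ t in Ioc 0 (2*π), ‖P t‖^2) = (2*π) * ∑ γ ∈ F, ‖a γ‖^2 := by
    have hco : ∀ n : ℤ, ‖∫ t in Ioc 0 (2*π), Complex.exp (Complex.I * n * t)
        * (starRingEnd ℂ) (P t)‖^2
        = if n ∈ F then (2*π)^2 * ‖a n‖^2 else 0 := by
      intro n
      have := trig_int F a n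
      rw [hPdef] at *
      simp only [] at this ⊢
      rw [this]
      by_cases hn : n ∈ F
      · rw [if_pos hn, if_pos hn, norm_mul, Complex.norm_real, RCLike.norm_conj,
          Real.norm_eq_abs, abs_of_pos hπ, mul_pow]
      · rw [if_neg hn, if_neg hn, norm_zero]
        norm_num
    have h1 : ∑' n : ℤ, ‖∫ t in Ioc 0 (2*π), Complex.exp (Complex.I * n * t)
        * (starRingEnd ℂ) (P t)‖^2 = ∑ γ ∈ F, (2*π)^2 * ‖a γ‖^2 := by
      rw [tsum_eq_sum (s := F) (fun n hn => by rw [hco n, if_neg hn])]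
      exact Finset.sum_congr rfl fun n hn => by rw [hco n, if_pos hn]
    have h2 := hpT.2
    have h3 : (∫ t in Ioc 0 (2*π), ‖(starRingEnd ℂ) (P t)‖^2)
        = ∫ t in Ioc 0 (2*π), ‖P t‖^2 :=
      setIntegral_congr_fun measurableSet_Ioc fun t _ => by rw [RCLike.norm_conj]
    rw [h1, h3] at h2
    rw [← Finset.mul_sum] at h2
    have hne : (2*π : ℝ) ≠ 0 := ne_of_gt hπ
    field_simp at h2 ⊢
    nlinarith [h2]
  -- splitting
  have hSplit : (∫ t in Ioc 0 (2*π), ‖P t‖^2)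
      = (∫ t in E, ‖P t‖^2) + ∫ t in D, ‖P t‖^2 := by
    rw [← hunion]
    exact setIntegral_union hdisj hDm
      (((hPc.norm.pow 2).integrableOn_Ioc).mono_set hEsub)
      (((hPc.norm.pow 2).integrableOn_Ioc).mono_set hDsub)
  -- identify goal RHS integral with ∫ over D
  have hGoalD : (∫ t in Set.Icc 0 (2 * Real.pi) \ S, ‖P t‖^2) = ∫ t in D, ‖P t‖^2 := by
    apply setIntegral_congr_set
    rw [MeasureTheory.ae_eq_set]
    constructor
    · refine measure_mono_null ?_ (measure_singleton (0:ℝ))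
      intro x hx
      rcases hx with ⟨⟨⟨hx1, hx2⟩, hxS⟩, hnot⟩
      simp only [mem_singleton_iff]
      by_contra hx0
      exact hnot ⟨⟨lt_of_le_of_ne hx1 (Ne.symm hx0), hx2⟩, hxS⟩
    · refine measure_mono_null ?_ measure_empty
      intro x hx
      simp only [mem_diff, mem_Icc, mem_Ioc] at hx
      exact absurd ⟨⟨le_of_lt hx.1.1.1, hx.1.1.2⟩, hx.1.2⟩ hx.2
  -- final arithmetic
  have hIE0 : 0 ≤ ∫ t in E, ‖P t‖^2 :=
    setIntegral_nonneg hEm fun t _ => by positivity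
  have hID0 : 0 ≤ ∫ t in D, ‖P t‖^2 :=
    setIntegral_nonneg hDm fun t _ => by positivity
  have hA0 : 0 ≤ ∑ γ ∈ F, ‖a γ‖^2 := Finset.sum_nonneg fun γ _ => by positivity
  rw [hPl] at hsampf
  have hchain : B * ((2*π) * ∫ t in E, ‖P t‖^2) ≤ (2*π) * ∫ t in D, ‖P t‖^2 :=
    le_trans hsampf hBoundD
  rw [hGoalD]
  set A : ℝ := ∑ γ ∈ F, ‖a γ‖^2
  set IE : ℝ := ∫ t in E, ‖P t‖^2
  set ID : ℝ := ∫ t in D, ‖P t‖^2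
  have hIED : IE = 2*π*A - ID := by rw [← hTot, hSplit]; ring
  have h4 : B * IE ≤ ID := by
    have h := hchain
    rw [show B * ((2*π) * IE) = (2*π) * (B * IE) by ring,
      show (2*π) * ID = (2*π) * ID from rfl] at h
    exact le_of_mul_le_mul_left h hπ
  have h6 : 2*π*A = IE + ID := by linarith [hIED]
  have h5 : B * (2*π*A) ≤ 2 * ID := by
    rw [h6, mul_add]
    nlinarith [h4, mul_nonneg (sub_nonneg.2 hB1) hID0]
  have hpine : (π:ℝ) ≠ 0 := Real.pi_ne_zero
  calc B / 2 * A = (B * (2*π*A)) / (4*π) := by field_simp; ring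
    _ ≤ (2 * ID) / (4*π) := by gcongr
    _ = 1 / (2*π) * ID := by field_simp; ring
end
end

section
/- Let m ∈ ℕ and g ∈ PW_{[0,2π/m]}. Then for every j ∈ ℤ, Σ_{k∈ℤ} |g(j+km)|² = (1/m)·‖g‖²_{L²(ℝ)}. -/
open MeasureTheory

namespace Stmt7Aux

open Set Complex


lemma norm_exp_I_mul (x t : ℝ) : ‖Complex.exp (Complex.I * x * t)‖ = 1 := by
  rw [Complex.norm_exp]
  simp [Complex.mul_re]

lemma lintegral_sq_lt_top {f : ℝ → ℂ} (hf : MemLp f 2 volume) :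
    ∫⁻ t, (‖f t‖₊ : ENNReal) ^ 2 < ⊤ := by
  have h : ∫⁻ t, (‖(‖f t‖ ^ 2 : ℝ)‖₊ : ENNReal) ∂volume < ⊤ :=
    ((memLp_two_iff_integrable_sq_norm hf.1).mp hf).2
  have e : ∀ t : ℝ, (‖f t‖₊ : ENNReal) ^ 2 = (‖(‖f t‖ ^ 2 : ℝ)‖₊ : ENNReal) := fun t => by
    simp [nnnorm_pow, nnnorm_norm, ENNReal.coe_pow]
  simp_rw [e]; exact h

set_option maxHeartbeats 1000000 in
lemma key (m : ℕ) (hm : 0 < m) (u : ℝ → ℂ) (hsm : StronglyMeasurable u)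
    (hu1 : Integrable u) (hu2 : MemLp u 2)
    (hsupp : ∀ t, t ∉ Set.Icc 0 (2 * Real.pi / m) → u t = 0) (x : ℝ) :
    Summable (fun k : ℤ => ‖∫ t : ℝ, Complex.exp (Complex.I * (x + k * m) * t) * u t‖ ^ 2) ∧
    ∑' k : ℤ, ‖∫ t : ℝ, Complex.exp (Complex.I * (x + k * m) * t) * u t‖ ^ 2
      = (2 * Real.pi / m) * ∫ t : ℝ, ‖u t‖ ^ 2 := by
  have hm' : (0 : ℝ) < m := by exact_mod_cast hm
  set T : ℝ := 2 * Real.pi / m with hTdef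
  have hT : 0 < T := by positivity
  haveI : Fact (0 < T) := ⟨hT⟩
  set h : ℝ → ℂ := fun t => Complex.exp (Complex.I * x * t) * u t with hh
  have hch : Continuous fun t : ℝ => Complex.exp (Complex.I * x * t) := by
    apply Complex.continuous_exp.comp
    exact (continuous_const.mul Complex.continuous_ofReal)
  have hsmh : StronglyMeasurable h := (hch.stronglyMeasurable).mul hsm
  have hnorm : ∀ t, ‖h t‖ = ‖u t‖ := fun t => by
    rw [hh]; simp only [norm_mul, norm_exp_I_mul, one_mul]
  have hh2 : MemLp h 2 := hu2.of_le hsmh.aestronglyMeasurable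
    (Filter.Eventually.of_forall fun t => (hnorm t).le)
  set F : AddCircle T → ℂ := AddCircle.liftIoc T 0 h with hF
  have hFmeas : StronglyMeasurable F := by
    have : Measurable F :=
      ((hsmh.measurable).comp measurable_subtype_coe).comp
        (AddCircle.measurableEquivIoc T 0).measurable
    exact this.stronglyMeasurable
  have hFh : ∀ b ∈ Ioc (0:ℝ) T, F b = h b := fun b hb =>
    AddCircle.liftIoc_coe_apply (by rwa [zero_add])
  -- lintegral transfer
  have hlint : ∫⁻ a : AddCircle T, (‖F a‖₊ : ENNReal) ^ 2
      = ∫⁻ b in Ioc (0:ℝ) T, (‖h b‖₊ : ENNReal) ^ 2 := by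
    rw [← AddCircle.lintegral_preimage T 0 (fun a => (‖F a‖₊ : ENNReal) ^ 2), zero_add]
    refine setLIntegral_congr_fun measurableSet_Ioc (fun b hb => ?_)
    rw [hFh b hb]
  -- MemLp F
  have hfin : ∫⁻ a : AddCircle T, (‖F a‖₊ : ENNReal) ^ 2 < ⊤ := by
    rw [hlint]
    exact lt_of_le_of_lt (setLIntegral_le_lintegral _ _) (lintegral_sq_lt_top hh2)
  have MemF : MemLp F 2 (AddCircle.haarAddCircle) := by
    refine ⟨hFmeas.aestronglyMeasurable, ?_⟩
    rw [eLpNorm_eq_lintegral_rpow_enorm_toReal (by norm_num) (by norm_num)]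
    have h2 : ∫⁻ a : AddCircle T, (‖F a‖₊ : ENNReal) ^ ((2:ENNReal).toReal)
        ∂AddCircle.haarAddCircle < ⊤ := by
      have heq : ∫⁻ a : AddCircle T, (‖F a‖₊ : ENNReal) ^ ((2:ENNReal).toReal)
          ∂AddCircle.haarAddCircle
          = ∫⁻ a : AddCircle T, (‖F a‖₊ : ENNReal) ^ 2 ∂AddCircle.haarAddCircle := by
        congr 1; funext a
        rw [ENNReal.toReal_ofNat, show ((2:ℝ) = ((2:ℕ):ℝ)) by norm_num, ENNReal.rpow_natCast]
      rw [heq]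
      by_contra hcon
      push_neg at hcon
      have htop : ∫⁻ a : AddCircle T, (‖F a‖₊ : ENNReal) ^ 2 ∂AddCircle.haarAddCircle = ⊤ :=
        top_le_iff.mp hcon
      have : ∫⁻ a : AddCircle T, (‖F a‖₊ : ENNReal) ^ 2 = ⊤ := by
        rw [AddCircle.volume_eq_smul_haarAddCircle, lintegral_smul_measure, htop, smul_eq_mul,
          ENNReal.mul_top (ENNReal.ofReal_pos.mpr hT).ne']
      exact absurd this hfin.ne
    exact ENNReal.rpow_lt_top_of_nonneg (by norm_num) h2.ne
  -- Parseval
  set FLp := MemF.toLp F with hFLp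
  have hcoeff : ∀ n : ℤ, fourierCoeff (FLp : AddCircle T → ℂ) n = fourierCoeff F n := by
    intro n
    apply integral_congr_ae
    filter_upwards [MemF.coeFn_toLp] with a ha
    rw [ha]
  have hsum2 : Summable fun i : ℤ => ‖fourierCoeff F i‖ ^ 2 := by
    have hmem := lp.memℓp (fourierBasis.repr FLp)
    rw [memℓp_gen_iff (by norm_num)] at hmem
    have hs : Summable fun i : ℤ => ‖(fourierBasis.repr FLp) i‖ ^ 2 := by
      have e2 : ((2 : ENNReal).toReal) = ((2 : ℕ) : ℝ) := by norm_num
      simpa [e2, Real.rpow_natCast] using hmem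
    refine hs.congr fun i => ?_
    rw [fourierBasis_repr, hcoeff]
  have hintF : ∫ t : AddCircle T, ‖F t‖ ^ 2 ∂AddCircle.haarAddCircle
      = (1 / T) * ∫ t : ℝ, ‖u t‖ ^ 2 := by
    have h1 : ∫ t, ‖F t‖ ^ 2 ∂(volume : Measure (AddCircle T))
        = T * ∫ t, ‖F t‖ ^ 2 ∂AddCircle.haarAddCircle := by
      rw [AddCircle.volume_eq_smul_haarAddCircle, integral_smul_measure,
        ENNReal.toReal_ofReal hT.le, smul_eq_mul]
    have h2 : ∫ t, ‖F t‖ ^ 2 ∂(volume : Measure (AddCircle T)) = ∫ t : ℝ, ‖u t‖ ^ 2 := by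
      rw [← AddCircle.integral_preimage T 0 (fun b => ‖F b‖ ^ 2), zero_add]
      have e1 : ∫ b in Ioc (0:ℝ) T, ‖F (b : AddCircle T)‖ ^ 2 = ∫ b in Ioc (0:ℝ) T, ‖u b‖ ^ 2 := by
        refine setIntegral_congr_fun measurableSet_Ioc fun b hb => ?_
        rw [hFh b hb, hnorm]
      rw [e1, ← integral_Icc_eq_integral_Ioc]
      exact setIntegral_eq_integral_of_forall_compl_eq_zero fun t ht => by
        rw [hsupp t ht, norm_zero]; norm_num
    rw [← h2, h1]
    field_simp
  have hFLpnorm : ∫ t : AddCircle T, ‖(FLp : AddCircle T → ℂ) t‖ ^ 2 ∂AddCircle.haarAddCircle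
      = ∫ t, ‖F t‖ ^ 2 ∂AddCircle.haarAddCircle := by
    apply integral_congr_ae
    filter_upwards [MemF.coeFn_toLp] with a ha
    rw [ha]
  have hparseval : ∑' i : ℤ, ‖fourierCoeff F i‖ ^ 2 = (1 / T) * ∫ t : ℝ, ‖u t‖ ^ 2 := by
    have hp := tsum_sq_fourierCoeff FLp
    rw [hFLpnorm, hintF] at hp
    rw [← hp]
    exact tsum_congr fun i => by rw [hcoeff]
  -- coefficients are the samples
  have hpi : (Real.pi : ℂ) ≠ 0 := by exact_mod_cast Real.pi_ne_zero
  have hmc : (m : ℂ) ≠ 0 := by exact_mod_cast hm'.ne'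
  have hfour : ∀ (k : ℤ) (t : ℝ), (fourier k (t : AddCircle T) : ℂ)
      = Complex.exp (Complex.I * k * m * t) := by
    intro k t
    rw [fourier_coe_apply]
    congr 1
    have hTc : (T : ℂ) = 2 * (Real.pi : ℂ) / m := by
      rw [hTdef]; push_cast; ring
    rw [hTc]
    field_simp
  have hsample : ∀ k : ℤ, (∫ t : ℝ, Complex.exp (Complex.I * (x + k * m) * t) * u t)
      = (T : ℂ) * fourierCoeff F (-k) := by
    intro k
    have hw : ∫ t in (0:ℝ)..T, (fourier k (t : AddCircle T) : ℂ) • F (t : AddCircle T)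
        = ∫ t : ℝ, Complex.exp (Complex.I * (x + k * m) * t) * u t := by
      rw [intervalIntegral.integral_of_le hT.le]
      have e1 : ∫ t in Ioc (0:ℝ) T, (fourier k (t : AddCircle T) : ℂ) • F (t : AddCircle T)
          = ∫ t in Ioc (0:ℝ) T, Complex.exp (Complex.I * (x + k * m) * t) * u t := by
        refine setIntegral_congr_fun measurableSet_Ioc fun t ht => ?_
        rw [smul_eq_mul, hFh t ht, hfour]
        show Complex.exp (Complex.I * k * m * t) * (Complex.exp (Complex.I * x * t) * u t) = _
        rw [← mul_assoc, ← Complex.exp_add]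
        congr 2
        push_cast
        ring
      rw [e1, ← integral_Icc_eq_integral_Ioc]
      exact setIntegral_eq_integral_of_forall_compl_eq_zero fun t ht => by
        rw [hsupp t ht, mul_zero]
    rw [fourierCoeff_eq_intervalIntegral F (-k) 0, zero_add, neg_neg, hw]
    rw [Complex.real_smul]
    have hTc0 : (T : ℂ) ≠ 0 := by exact_mod_cast hT.ne'
    push_cast
    rw [← mul_assoc]
    field_simp
  have hnormsample : ∀ k : ℤ, ‖∫ t : ℝ, Complex.exp (Complex.I * (x + k * m) * t) * u t‖ ^ 2
      = T ^ 2 * ‖fourierCoeff F (-k)‖ ^ 2 := by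
    intro k
    rw [hsample, norm_mul, mul_pow, Complex.norm_real, Real.norm_of_nonneg hT.le]
  have hsumneg : Summable fun k : ℤ => ‖fourierCoeff F (-k)‖ ^ 2 :=
    (Equiv.neg ℤ).summable_iff.mpr hsum2
  constructor
  · exact (hsumneg.mul_left (T ^ 2)).congr fun k => (hnormsample k).symm
  · calc ∑' k : ℤ, ‖∫ t : ℝ, Complex.exp (Complex.I * (x + k * m) * t) * u t‖ ^ 2
        = ∑' k : ℤ, T ^ 2 * ‖fourierCoeff F (-k)‖ ^ 2 := tsum_congr fun k => hnormsample k
      _ = T ^ 2 * ∑' k : ℤ, ‖fourierCoeff F (-k)‖ ^ 2 := tsum_mul_left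
      _ = T ^ 2 * ∑' k : ℤ, ‖fourierCoeff F k‖ ^ 2 := by
          congr 1
          simpa using (Equiv.neg ℤ).tsum_eq fun k => ‖fourierCoeff F k‖ ^ 2
      _ = T ^ 2 * ((1 / T) * ∫ t : ℝ, ‖u t‖ ^ 2) := by rw [hparseval]
      _ = T * ∫ t : ℝ, ‖u t‖ ^ 2 := by field_simp

end Stmt7Aux

set_option maxHeartbeats 1000000 in
/-- exact sampling identity on the progression `{j+km}` for
functions with spectrum in `[0, 2π/m]`. -/
theorem stmt_7 (m : ℕ) (hm : 0 < m) (g : ℝ → ℂ)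
    (hg : IsPW (Set.Icc 0 (2 * Real.pi / m)) g) (j : ℤ) :
    ∑' k : ℤ, ‖g ((j : ℝ) + k * m)‖ ^ 2 = (1 / m) * ∫ x : ℝ, ‖g x‖ ^ 2 := by
  classical
  obtain ⟨u, hu1, hu2, hsupp, hrep⟩ := hg
  have hm' : (0 : ℝ) < m := by exact_mod_cast hm
  set T : ℝ := 2 * Real.pi / m with hTdef
  have hT : 0 < T := by positivity
  -- a strongly measurable representative with pointwise support in `Icc 0 T`
  set v : ℝ → ℂ := (Set.Icc (0:ℝ) T).indicator (hu1.1.mk u) with hv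
  have hv_ae : v =ᵐ[volume] u := by
    filter_upwards [hu1.1.ae_eq_mk] with t ht
    by_cases hmem : t ∈ Set.Icc (0:ℝ) T
    · rw [hv]; simp only [Set.indicator_of_mem hmem]; exact ht.symm
    · rw [hv]; simp only [Set.indicator_of_notMem hmem]; exact (hsupp t hmem).symm
  have hsm_v : StronglyMeasurable v := hu1.1.stronglyMeasurable_mk.indicator measurableSet_Icc
  have hv1 : Integrable v := hu1.congr hv_ae.symm
  have hv2 : MemLp v 2 := hu2.ae_eq hv_ae.symm
  have hvsupp : ∀ t, t ∉ Set.Icc (0:ℝ) T → v t = 0 := fun t ht =>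
    Set.indicator_of_notMem ht _
  have hrep' : ∀ x : ℝ, g x = ∫ t : ℝ, Complex.exp (Complex.I * x * t) * v t := by
    intro x
    rw [hrep x]
    refine integral_congr_ae ?_
    filter_upwards [hv_ae] with t ht
    rw [ht]
  have hkey := fun x : ℝ => Stmt7Aux.key m hm v hsm_v hv1 hv2 hvsupp x
  set C : ℝ := T * ∫ t : ℝ, ‖v t‖ ^ 2 with hC
  have hC0 : 0 ≤ C := mul_nonneg hT.le (integral_nonneg fun t => by positivity)
  have hLgen : ∀ x : ℝ, Summable (fun k : ℤ => ‖g (x + k * m)‖ ^ 2) ∧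
      ∑' k : ℤ, ‖g (x + k * m)‖ ^ 2 = C := by
    intro x
    have e : ∀ k : ℤ, g (x + k * m)
        = ∫ t : ℝ, Complex.exp (Complex.I * ((x:ℂ) + (k:ℂ) * (m:ℂ)) * t) * v t := fun k => by
      rw [hrep' (x + k * m)]; norm_cast
    constructor
    · exact (hkey x).1.congr fun k => by rw [e]
    · rw [← (hkey x).2]; exact tsum_congr fun k => by rw [e]
  -- continuity of `g`
  have hgc : Continuous g := by
    have hc : Continuous fun x : ℝ => ∫ t : ℝ, Complex.exp (Complex.I * x * t) * v t := by
      apply continuous_of_dominated (bound := fun t => ‖v t‖)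
      · intro x
        exact (((Complex.continuous_exp.comp
          (continuous_const.mul Complex.continuous_ofReal)).stronglyMeasurable).mul
          hsm_v).aestronglyMeasurable
      · intro x
        refine Filter.Eventually.of_forall fun t => ?_
        rw [norm_mul, Stmt7Aux.norm_exp_I_mul, one_mul]
      · exact hv1.norm
      · refine Filter.Eventually.of_forall fun t => ?_
        have : Continuous fun x : ℝ => Complex.exp (Complex.I * x * t) :=
          Complex.continuous_exp.comp
            (((continuous_const.mul Complex.continuous_ofReal).mul continuous_const))
        exact this.mul continuous_const
    have : g = fun x : ℝ => ∫ t : ℝ, Complex.exp (Complex.I * x * t) * v t := funext hrep'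
    rw [this]
    exact hc
  -- the right-hand side
  have hR : ∫ x : ℝ, ‖g x‖ ^ 2 = C * m := by
    rw [integral_eq_lintegral_of_nonneg_ae (f := fun x => ‖g x‖ ^ 2) (Filter.Eventually.of_forall fun x => by positivity)
      ((hgc.norm.pow 2 : Continuous fun x => ‖g x‖ ^ 2)).aestronglyMeasurable]
    have hdisj : Pairwise (Function.onFun Disjoint fun k : ℤ => Set.Ioc (k • (m:ℝ)) ((k+1) • (m:ℝ))) := by
      simpa using Set.pairwise_disjoint_Ioc_add_zsmul (0:ℝ) (m:ℝ)
    have hcover : ∫⁻ x : ℝ, ENNReal.ofReal (‖g x‖ ^ 2)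
        = ∑' k : ℤ, ∫⁻ x in Set.Ioc (k • (m:ℝ)) ((k+1) • (m:ℝ)), ENNReal.ofReal (‖g x‖ ^ 2) := by
      have hiu := lintegral_iUnion (μ := volume)
        (s := fun k : ℤ => Set.Ioc (k • (m:ℝ)) ((k+1) • (m:ℝ)))
        (fun k => measurableSet_Ioc) hdisj (fun x => ENNReal.ofReal (‖g x‖ ^ 2))
      rw [iUnion_Ioc_zsmul hm', Measure.restrict_univ] at hiu
      exact hiu
    have htrans : ∀ k : ℤ, ∫⁻ x in Set.Ioc (k • (m:ℝ)) ((k+1) • (m:ℝ)), ENNReal.ofReal (‖g x‖ ^ 2)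
        = ∫⁻ x in Set.Ioc (0:ℝ) m, ENNReal.ofReal (‖g (x + k * m)‖ ^ 2) := by
      intro k
      have hmp : MeasurePreserving (fun y : ℝ => y + ((k : ℝ) * m)) volume volume :=
        measurePreserving_add_right volume _
      have hemb : MeasurableEmbedding (fun y : ℝ => y + ((k : ℝ) * m)) :=
        (MeasurableEquiv.addRight ((k : ℝ) * m)).measurableEmbedding
      have himg := hmp.setLIntegral_comp_emb hemb
        (fun x => ENNReal.ofReal (‖g x‖ ^ 2)) (Set.Ioc (0:ℝ) m)
      have himset : ((fun y : ℝ => y + ((k : ℝ) * m)) '' Set.Ioc (0:ℝ) m)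
          = Set.Ioc (k • (m:ℝ)) ((k+1) • (m:ℝ)) := by
        rw [Set.image_add_const_Ioc]
        congr 1 <;> push_cast [zsmul_eq_mul] <;> ring
      rw [himset] at himg
      exact himg.symm
    have hsummand : ∀ x : ℝ, ∑' k : ℤ, ENNReal.ofReal (‖g (x + k * m)‖ ^ 2)
        = ENNReal.ofReal C := by
      intro x
      rw [← ENNReal.ofReal_tsum_of_nonneg (fun k => by positivity) (hLgen x).1, (hLgen x).2]
    calc (∫⁻ x : ℝ, ENNReal.ofReal (‖g x‖ ^ 2)).toReal
        = (∑' k : ℤ, ∫⁻ x in Set.Ioc (0:ℝ) m, ENNReal.ofReal (‖g (x + k * m)‖ ^ 2)).toReal := by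
          rw [hcover]; congr 1; exact tsum_congr htrans
      _ = (∫⁻ x in Set.Ioc (0:ℝ) m, ∑' k : ℤ, ENNReal.ofReal (‖g (x + k * m)‖ ^ 2)).toReal := by
          have hm_k : ∀ k : ℤ, Measurable fun x : ℝ => ENNReal.ofReal (‖g (x + k * m)‖ ^ 2) := by
            intro k
            have hck : Continuous fun x : ℝ => ‖g (x + k * m)‖ ^ 2 :=
              ((hgc.comp (continuous_id.add continuous_const)).norm.pow 2)
            exact hck.measurable.ennreal_ofReal
          exact congrArg ENNReal.toReal
            (lintegral_tsum (f := fun (k : ℤ) (x : ℝ) => ENNReal.ofReal (‖g (x + k * m)‖ ^ 2))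
              (fun k => (hm_k k).aemeasurable)).symm
      _ = (ENNReal.ofReal C * volume (Set.Ioc (0:ℝ) m)).toReal := by
          rw [setLIntegral_congr_fun measurableSet_Ioc
            (fun x _ => hsummand x), setLIntegral_const]
      _ = C * m := by
          rw [Real.volume_Ioc, sub_zero, ENNReal.toReal_mul, ENNReal.toReal_ofReal hC0,
            ENNReal.toReal_ofReal hm'.le]
  rw [(hLgen (j : ℝ)).2, hR]
  field_simp
end

section
/- (Ruzsa's theorem) Let H be a family of finite subsets of ℤ that is closed under translations and under taking subsets. Then the limit d(H) = lim_{n→∞} max_{A∈H}|A∩[-n,n]|/(2n) exists, and there exists Γ ⊆ ℤ with D^♯(Γ) = lim_{n→∞}|Γ∩[-n,n]|/(2n) = d(H) such that every finite subset of Γ belongs to H. -/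
open Filter Finset
open scoped Classical

noncomputable section RuzsaAux
set_option linter.unusedSectionVars false
set_option linter.unusedVariables false
set_option maxHeartbeats 1000000

def rcnt (A : Finset ℤ) (a b : ℤ) : ℕ := (A.filter fun k => a < k ∧ k ≤ b).card

lemma rcnt_le (A : Finset ℤ) (a b : ℤ) : rcnt A a b ≤ (b - a).toNat := by
  classical
  have h : (A.filter fun k => a < k ∧ k ≤ b) ⊆ Finset.Ioc a b := by
    intro k hk
    simp only [Finset.mem_filter, Finset.mem_Ioc] at *
    tauto
  calc rcnt A a b ≤ (Finset.Ioc a b).card := Finset.card_le_card h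
  _ = (b - a).toNat := Int.card_Ioc a b

lemma rcnt_add (A : Finset ℤ) {a b c : ℤ} (hab : a ≤ b) (hbc : b ≤ c) :
    rcnt A a c = rcnt A a b + rcnt A b c := by
  classical
  unfold rcnt
  rw [← Finset.card_union_of_disjoint]
  · congr 1
    ext k
    simp only [Finset.mem_union, Finset.mem_filter]
    constructor
    · rintro ⟨hA, h1, h2⟩
      by_cases hb : k ≤ b
      · exact Or.inl ⟨hA, h1, hb⟩
      · exact Or.inr ⟨hA, by omega, h2⟩
    · rintro (⟨hA, h1, h2⟩ | ⟨hA, h1, h2⟩)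
      · exact ⟨hA, h1, by omega⟩
      · exact ⟨hA, by omega, h2⟩
  · rw [Finset.disjoint_left]
    intro k hk hk'
    simp only [Finset.mem_filter] at hk hk'
    omega

lemma rcnt_mono_window (A : Finset ℤ) {a b b' : ℤ} (h : b ≤ b') :
    rcnt A a b ≤ rcnt A a b' := by
  classical
  apply Finset.card_le_card
  intro k hk
  simp only [Finset.mem_filter] at *
  exact ⟨hk.1, hk.2.1, le_trans hk.2.2 h⟩

lemma rcnt_le_card (A : Finset ℤ) (a b : ℤ) : rcnt A a b ≤ A.card :=
  Finset.card_le_card (Finset.filter_subset _ _)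

lemma rcnt_translate (A : Finset ℤ) (t a b : ℤ) :
    rcnt (A.image (· + t)) a b = rcnt A (a - t) (b - t) := by
  classical
  unfold rcnt
  rw [← Finset.card_image_of_injective (A.filter _) (add_left_injective t)]
  congr 1
  ext k
  simp only [Finset.mem_image, Finset.mem_filter]
  constructor
  · rintro ⟨⟨x, hx, hxk⟩, h1, h2⟩
    exact ⟨x, ⟨hx, by omega, by omega⟩, hxk⟩
  · rintro ⟨x, ⟨hx, h1, h2⟩, hxk⟩
    exact ⟨⟨x, hx, hxk⟩, by omega, by omega⟩

lemma cover_lemma (d ε δ C : ℝ) (n₀ m : ℕ) (hε : 0 < ε) (hδ : 0 < δ) (hδε : δ ≤ ε)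
    (hC : 0 ≤ C) (hCn₀ : C ≤ δ * n₀) (hn₀ : 1 ≤ n₀)
    (μ : ℤ → ℤ → ℝ)
    (hadd : ∀ a b c : ℤ, a ≤ b → b ≤ c → μ a c = μ a b + μ b c)
    (hup : ∀ a b : ℤ, a ≤ b → μ a b ≤ (d + δ) * ((b : ℝ) - (a : ℝ)) + C)
    (htot : d * m ≤ μ 0 m) :
    (((Finset.Ico (0:ℤ) (m:ℤ)).filter
      (fun c => ∃ n : ℕ, n₀ ≤ n ∧ c + n ≤ (m:ℤ) ∧ μ c (c + n) < (d - ε) * n)).card : ℝ)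
      ≤ 2 * (δ * m + C) / ε := by
  classical
  set bad : ℤ → Prop := fun c => ∃ n : ℕ, n₀ ≤ n ∧ c + n ≤ (m:ℤ) ∧ μ c (c + n) < (d - ε) * n
    with hbaddef
  have key : ∀ t : ℕ, t ≤ m → ∃ J k : ℕ,
      (((Finset.Ico ((m:ℤ) - t) (m:ℤ)).filter bad).card ≤ 2 * J) ∧ J ≤ t ∧
      n₀ * k ≤ J + n₀ ∧
      μ ((m:ℤ) - t) m ≤ (d - ε) * J + (d + δ) * ((t:ℝ) - J) + k * C := by
    intro t
    induction t using Nat.strong_induction_on with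
    | _ t IH =>
    intro ht
    set a : ℤ := (m:ℤ) - t with ha
    have hex : ∃ s : ℕ, s = t ∨ bad (a + (s:ℤ)) := ⟨t, Or.inl rfl⟩
    set r := Nat.find hex with hr
    have hrspec : r = t ∨ bad (a + (r:ℤ)) := Nat.find_spec hex
    have hrt : r ≤ t := Nat.find_le (Or.inl rfl)
    have hgoodlt : ∀ s : ℕ, s < r → ¬ bad (a + s) := by
      intro s hs hb
      exact Nat.find_min hex hs (Or.inr hb)
    have hgoodIco : ∀ c ∈ Finset.Ico a (a + (r:ℤ)), ¬ bad c := by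
      intro c hc
      rw [Finset.mem_Ico] at hc
      have hs : c = a + ((c - a).toNat : ℤ) := by omega
      have hslt : (c - a).toNat < r := by omega
      rw [hs]
      exact hgoodlt _ hslt
    by_cases hbad : bad (a + (r:ℤ))
    · -- main case
      have hrltt : r < t := by
        rcases lt_or_eq_of_le hrt with h | h
        · exact h
        · exfalso
          obtain ⟨n, hn1, hn2, _⟩ := hbad
          rw [h] at hn2
          have : a + (t:ℤ) = m := by omega
          omega
      obtain ⟨n, hn₀n, hnm, hsparse⟩ := hbad
      have hn1 : 1 ≤ n := le_trans hn₀ hn₀n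
      have hrnt : r + n ≤ t := by
        have : a + (r:ℤ) + n ≤ (m:ℤ) := hnm
        omega
      set t' := t - (r + n) with ht'
      have ht'lt : t' < t := by omega
      obtain ⟨J', k', hcard', hJ't', hk', hμ'⟩ := IH t' ht'lt (by omega)
      have hmt' : (m:ℤ) - t' = a + r + n := by push_cast; omega
      refine ⟨J' + n, k' + 1, ?_, by omega, by rw [Nat.mul_succ]; omega, ?_⟩
      · -- card bound
        have hsplit : Finset.Ico a (m:ℤ) =
            Finset.Ico a (a + r + n) ∪ Finset.Ico (a + r + n) (m:ℤ) := by
          rw [Finset.Ico_union_Ico_eq_Ico] <;> omega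
        rw [hsplit, Finset.filter_union]
        calc ((Finset.Ico a (a + r + n)).filter bad ∪
              (Finset.Ico (a + r + n) (m:ℤ)).filter bad).card
            ≤ ((Finset.Ico a (a + r + n)).filter bad).card +
              ((Finset.Ico (a + r + n) (m:ℤ)).filter bad).card := Finset.card_union_le _ _
          _ ≤ n + 2 * J' := by
              have h1 : ((Finset.Ico a (a + r + n)).filter bad).card ≤ n := by
                have hsub : (Finset.Ico a (a + r + n)).filter bad ⊆
                    Finset.Ico (a + r) (a + r + n) := by
                  intro c hc
                  rw [Finset.mem_filter, Finset.mem_Ico] at hc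
                  rw [Finset.mem_Ico]
                  refine ⟨?_, hc.1.2⟩
                  by_contra hlt
                  push_neg at hlt
                  exact hgoodIco c (by rw [Finset.mem_Ico]; omega) hc.2
                calc _ ≤ (Finset.Ico (a + r) (a + r + n)).card := Finset.card_le_card hsub
                  _ = n := by rw [Int.card_Ico]; omega
              have h2 : ((Finset.Ico (a + r + n) (m:ℤ)).filter bad).card ≤ 2 * J' := by
                rw [← hmt']
                exact hcard'
              omega
          _ ≤ 2 * (J' + n) := by omega
      · -- μ bound
        have e1 : μ a (m:ℤ) = μ a (a + r) + μ (a + r) (a + r + n) + μ (a + r + n) (m:ℤ) := by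
          rw [hadd a (a + r) (m:ℤ) (by omega) (by omega),
            hadd (a + r) (a + r + n) (m:ℤ) (by omega) (by omega)]
          ring
        have b1 : μ a (a + r) ≤ (d + δ) * r + C := by
          have := hup a (a + r) (by omega)
          have e : ((a + (r:ℤ) : ℤ) : ℝ) - (a : ℝ) = (r : ℝ) := by push_cast; ring
          rw [e] at this
          exact this
        have b3 : μ (a + r + n) (m:ℤ) ≤ (d - ε) * J' + (d + δ) * ((t':ℝ) - J') + k' * C := by
          rw [← hmt']; exact hμ'
        have hcast : (t' : ℝ) = (t : ℝ) - r - n := by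
          rw [ht', Nat.cast_sub hrnt]; push_cast; ring
        have hsp : μ (a + r) (a + r + n) < (d - ε) * n := by
          have : a + (r:ℤ) + n = (a + r) + (n:ℤ) := by ring
          rw [this] at hsparse ⊢
          exact hsparse
        rw [ha] at e1 ⊢
        rw [e1]
        have target : (d + δ) * r + C + (d - ε) * n + ((d - ε) * J' + (d + δ) * ((t':ℝ) - J') + k' * C)
            = (d - ε) * ((J' + n : ℕ) : ℝ) + (d + δ) * ((t:ℝ) - ((J' + n : ℕ) : ℝ)) + ((k' + 1 : ℕ) : ℝ) * C := by
          rw [hcast]; push_cast; ring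
        linarith
    · -- end case
      have hrt' : r = t := by
        rcases hrspec with h | h
        · exact h
        · exact absurd h hbad
      refine ⟨0, 1, ?_, by omega, by omega, ?_⟩
      · have : ((Finset.Ico a (m:ℤ)).filter bad) = ∅ := by
          apply Finset.filter_eq_empty_iff.mpr
          intro c hc
          apply hgoodIco
          rw [hrt']
          have : a + (t:ℤ) = (m:ℤ) := by omega
          rw [this]
          exact hc
        rw [ha] at this ⊢
        rw [this]
        simp
      · have := hup a (m:ℤ) (by omega)
        have e : ((m:ℤ) : ℝ) - (a : ℝ) = (t : ℝ) := by
          rw [ha]; push_cast; ring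
        rw [e] at this
        rw [ha]
        push_cast
        linarith
  obtain ⟨J, k, hcard, hJ, hk, hμ⟩ := key m (le_refl m)
  have h0 : (m:ℤ) - m = 0 := by omega
  rw [h0] at hcard hμ
  have hJR : ε * J ≤ δ * m + C := by
    have hkR : (n₀ : ℝ) * k ≤ (J : ℝ) + n₀ := by exact_mod_cast hk
    have hn₀R : (1:ℝ) ≤ (n₀:ℝ) := by exact_mod_cast hn₀
    have hkC : (k:ℝ) * C ≤ δ * J + C := by
      have h1 : (k : ℝ) * C * n₀ ≤ ((J:ℝ) + n₀) * C := by nlinarith [Nat.cast_nonneg (α := ℝ) k]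
      nlinarith [Nat.cast_nonneg (α := ℝ) J, Nat.cast_nonneg (α := ℝ) n₀]
    nlinarith [Nat.cast_nonneg (α := ℝ) J]
  have hcardR : (((Finset.Ico (0:ℤ) (m:ℤ)).filter bad).card : ℝ) ≤ 2 * J := by
    exact_mod_cast hcard
  rw [hbaddef] at hcardR
  calc (((Finset.Ico (0:ℤ) (m:ℤ)).filter
      (fun c => ∃ n : ℕ, n₀ ≤ n ∧ c + n ≤ (m:ℤ) ∧ μ c (c + n) < (d - ε) * n)).card : ℝ)
      ≤ 2 * J := hcardR
    _ ≤ 2 * (δ * m + C) / ε := by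
        rw [div_eq_mul_inv]
        have hεinv : 0 < ε⁻¹ := by positivity
        have h1 : (J:ℝ) * ε ≤ δ * m + C := by linarith
        have h2 : (J:ℝ) = ((J:ℝ) * ε) * ε⁻¹ := by field_simp
        rw [h2]
        have h3 : ((J:ℝ) * ε) * ε⁻¹ ≤ (δ * m + C) * ε⁻¹ :=
          mul_le_mul_of_nonneg_right h1 (le_of_lt hεinv)
        nlinarith

def gH (H : Set (Finset ℤ)) (t : ℕ) : ℕ := sSup {c | ∃ A ∈ H, c = rcnt A 0 t}

variable {H : Set (Finset ℤ)}

section basic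

lemma gset_nonempty (hne : H.Nonempty) (t : ℕ) : {c | ∃ A ∈ H, c = rcnt A 0 t}.Nonempty := by
  obtain ⟨A, hA⟩ := hne
  exact ⟨rcnt A 0 t, A, hA, rfl⟩

lemma gset_bdd (t : ℕ) : BddAbove {c | ∃ A ∈ H, c = rcnt A 0 t} := by
  refine ⟨t, ?_⟩
  rintro c ⟨A, hA, rfl⟩
  simpa using rcnt_le A 0 t

lemma rcnt_filter_window (A : Finset ℤ) (a b : ℤ) :
    rcnt (A.filter fun k => a < k ∧ k ≤ b) a b = rcnt A a b := by
  classical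
  unfold rcnt
  rw [Finset.filter_filter]
  congr 1
  apply Finset.filter_congr
  intro k _
  simp only [and_self]

lemma rcnt_le_gH (htrans : ∀ A ∈ H, ∀ t : ℤ, A.image (· + t) ∈ H) (hhered : ∀ A ∈ H, ∀ B ⊆ A, B ∈ H) {A : Finset ℤ} (hA : A ∈ H) (a b : ℤ) (hab : a ≤ b) :
    rcnt A a b ≤ gH H ((b - a).toNat) := by
  classical
  set A' := A.filter (fun k => a < k ∧ k ≤ b) with hA'
  have hA'H : A' ∈ H := hhered A hA _ (Finset.filter_subset _ _)
  have hB : A'.image (· + (-a)) ∈ H := htrans A' hA'H (-a)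
  apply le_csSup (gset_bdd (H := H) _)
  refine ⟨A'.image (· + (-a)), hB, ?_⟩
  rw [rcnt_translate]
  have h1 : (0 : ℤ) - -a = a := by ring
  have h2 : (((b - a).toNat : ℤ)) - -a = b := by omega
  rw [h1, h2, hA', rcnt_filter_window]

lemma gH_attained (hne : H.Nonempty) (hhered : ∀ A ∈ H, ∀ B ⊆ A, B ∈ H) (t : ℕ) : ∃ E ∈ H, E ⊆ Finset.Ioc (0 : ℤ) (t : ℤ) ∧
    rcnt E 0 t = gH H t ∧ E.card = gH H t := by
  classical
  have hmem : gH H t ∈ {c | ∃ A ∈ H, c = rcnt A 0 t} :=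
    Nat.sSup_mem (gset_nonempty hne t) (gset_bdd (H := H) t)
  obtain ⟨A, hA, hval⟩ := hmem
  refine ⟨A.filter (fun k => 0 < k ∧ k ≤ (t : ℤ)), hhered A hA _ (Finset.filter_subset _ _),
    ?_, ?_, ?_⟩
  · intro k hk
    simp only [Finset.mem_filter] at hk
    simp [Finset.mem_Ioc, hk.2.1, hk.2.2]
  · rw [rcnt_filter_window]; omega
  · have : (A.filter (fun k => 0 < k ∧ k ≤ (t : ℤ))).card = rcnt A 0 t := rfl
    omega

lemma gH_subadd (hne : H.Nonempty) (htrans : ∀ A ∈ H, ∀ t : ℤ, A.image (· + t) ∈ H) (hhered : ∀ A ∈ H, ∀ B ⊆ A, B ∈ H) (s t : ℕ) : gH H (s + t) ≤ gH H s + gH H t := by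
  apply csSup_le (gset_nonempty hne _)
  rintro c ⟨A, hA, rfl⟩
  have hc : (((s + t : ℕ)) : ℤ) = (s : ℤ) + t := by push_cast; ring
  rw [hc]
  have h1 : rcnt A 0 ((s : ℤ) + t) = rcnt A 0 s + rcnt A (s : ℤ) ((s : ℤ) + t) := by
    have := rcnt_add A (a := 0) (b := (s : ℤ)) (c := ((s : ℤ) + t)) (by positivity) (by omega)
    rw [← this]
  have h2 := rcnt_le_gH htrans hhered hA 0 (s : ℤ) (by positivity)
  have h3 := rcnt_le_gH htrans hhered hA (s : ℤ) ((s : ℤ) + t) (by omega)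
  have e2 : ((s : ℤ) - 0).toNat = s := by omega
  have e3 : (((s : ℤ) + t) - s).toNat = t := by omega
  rw [e2] at h2
  rw [e3] at h3
  omega

lemma gH_mono (hne : H.Nonempty) (htrans : ∀ A ∈ H, ∀ t : ℤ, A.image (· + t) ∈ H) (hhered : ∀ A ∈ H, ∀ B ⊆ A, B ∈ H) {s t : ℕ} (h : s ≤ t) : gH H s ≤ gH H t := by
  apply csSup_le (gset_nonempty hne _)
  rintro c ⟨A, hA, rfl⟩
  have h1 : rcnt A 0 s ≤ rcnt A 0 t := rcnt_mono_window A (by exact_mod_cast h)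
  have h2 := rcnt_le_gH htrans hhered hA 0 (t : ℤ) (by positivity)
  have e : ((t : ℤ) - 0).toNat = t := by omega
  rw [e] at h2
  omega


lemma gH_zero (hne : H.Nonempty) : gH H 0 = 0 := by
  have h : gH H 0 ≤ 0 := csSup_le (gset_nonempty hne 0) (by
    rintro c ⟨A, hA, rfl⟩
    simpa using rcnt_le A 0 0)
  omega

end basic

section d
variable (hne : H.Nonempty) (htrans : ∀ A ∈ H, ∀ t : ℤ, A.image (· + t) ∈ H)
  (hhered : ∀ A ∈ H, ∀ B ⊆ A, B ∈ H)
include hne htrans hhered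
set_option linter.unusedSectionVars false

lemma gH_subadditive : Subadditive (fun n => (gH H n : ℝ)) := by
  intro m n
  have := gH_subadd hne htrans hhered m n
  simp only []
  exact_mod_cast this

def dR : ℝ := (gH_subadditive hne htrans hhered).lim

omit hne htrans hhered in
lemma gH_div_bdd : BddBelow (Set.range fun n : ℕ => (gH H n : ℝ) / n) := by
  refine ⟨0, ?_⟩
  rintro x ⟨n, rfl⟩
  positivity

lemma tendsto_dR :
    Tendsto (fun n : ℕ => (gH H n : ℝ) / n) atTop (nhds (dR hne htrans hhered)) :=
  (gH_subadditive hne htrans hhered).tendsto_lim gH_div_bdd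

lemma dR_nonneg : 0 ≤ dR hne htrans hhered := by
  have := tendsto_dR hne htrans hhered
  apply ge_of_tendsto this
  filter_upwards [eventually_ge_atTop 0] with n _
  positivity

lemma dR_mul_le (n : ℕ) : dR hne htrans hhered * n ≤ gH H n := by
  rcases Nat.eq_zero_or_pos n with h | h
  · subst h
    simp [gH_zero hne]
  · have h1 : dR hne htrans hhered ≤ (gH H n : ℝ) / n :=
      (gH_subadditive hne htrans hhered).lim_le_div (gH_div_bdd) (by omega)
    have hn : (0 : ℝ) < n := by exact_mod_cast h
    calc dR hne htrans hhered * n ≤ ((gH H n : ℝ) / n) * n := by nlinarith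
    _ = gH H n := by field_simp

lemma exists_linear_bound {δ : ℝ} (hδ : 0 < δ) :
    ∃ M₀ : ℕ, 1 ≤ M₀ ∧ ∀ t : ℕ,
      (gH H t : ℝ) ≤ (dR hne htrans hhered + δ) * t + gH H M₀ := by
  set d := dR hne htrans hhered with hd
  have hev : ∀ᶠ n : ℕ in atTop, (gH H n : ℝ) / n < d + δ :=
    (tendsto_dR hne htrans hhered).eventually (gt_mem_nhds (by linarith))
  obtain ⟨N, hN⟩ := hev.exists_forall_of_atTop
  set M₀ := max N 1 with hM₀
  have hM₀1 : 1 ≤ M₀ := le_max_right _ _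
  have hM₀pos : (0 : ℝ) < M₀ := by
    have : (1:ℕ) ≤ M₀ := hM₀1
    exact_mod_cast Nat.lt_of_lt_of_le Nat.zero_lt_one this
  have hbase : (gH H M₀ : ℝ) ≤ (d + δ) * M₀ := by
    have := hN M₀ (le_max_left _ _)
    calc (gH H M₀ : ℝ) = ((gH H M₀ : ℝ) / M₀) * M₀ := by field_simp
    _ ≤ (d + δ) * M₀ := by nlinarith
  have hdpos : 0 ≤ d := dR_nonneg hne htrans hhered
  refine ⟨M₀, hM₀1, ?_⟩
  intro t
  induction t using Nat.strong_induction_on with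
  | _ t IH =>
    rcases lt_or_ge t M₀ with ht | ht
    · have h1 : gH H t ≤ gH H M₀ := gH_mono hne htrans hhered (le_of_lt ht)
      have h2 : (0:ℝ) ≤ (d + δ) * t := by positivity
      have : (gH H t : ℝ) ≤ gH H M₀ := by exact_mod_cast h1
      linarith
    · have hsplit : gH H t ≤ gH H M₀ + gH H (t - M₀) := by
        have := gH_subadd hne htrans hhered M₀ (t - M₀)
        rwa [Nat.add_sub_cancel' ht] at this
      have hIH := IH (t - M₀) (by omega)
      have hc : ((t - M₀ : ℕ) : ℝ) = (t : ℝ) - M₀ := by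
        push_cast [Nat.cast_sub ht]; ring
      rw [hc] at hIH
      have : (gH H t : ℝ) ≤ (gH H M₀ : ℝ) + gH H (t - M₀) := by exact_mod_cast hsplit
      nlinarith
end d

section c
variable (hne : H.Nonempty) (htrans : ∀ A ∈ H, ∀ t : ℤ, A.image (· + t) ∈ H)
  (hhered : ∀ A ∈ H, ∀ B ⊆ A, B ∈ H)
include hne htrans hhered

omit hne htrans hhered in
def deltaf (j : ℕ) : ℝ := 1 / ((j+1 : ℝ) * 2^(j+4))

omit hne htrans hhered in
lemma deltaf_pos (j : ℕ) : 0 < deltaf j := by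
  unfold deltaf
  positivity

omit hne htrans hhered in
lemma deltaf_le (j : ℕ) : deltaf j ≤ 1 / (j+1 : ℝ) := by
  unfold deltaf
  rw [div_le_div_iff₀ (by positivity) (by positivity)]
  have h1 : (1:ℝ) ≤ 2^(j+4) := one_le_pow₀ (by norm_num)
  nlinarith [Nat.cast_nonneg (α := ℝ) j]

lemma params (j : ℕ) : ∃ (n₀ : ℕ) (C : ℝ), 0 ≤ C ∧ C ≤ deltaf j * n₀ ∧ 1 ≤ n₀ ∧
    ∀ t : ℕ, (gH H t : ℝ) ≤ ((dR hne htrans hhered) + deltaf j) * t + C := by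
  obtain ⟨M₀, hM₀, hlin⟩ := exists_linear_bound hne htrans hhered (deltaf_pos j)
  set C : ℝ := (gH H M₀ : ℝ) with hC
  have hC0 : 0 ≤ C := Nat.cast_nonneg _
  set n₀ : ℕ := max 1 ⌈C / deltaf j⌉₊ with hn₀
  refine ⟨n₀, C, hC0, ?_, le_max_left _ _, hlin⟩
  have h1 : C / deltaf j ≤ (⌈C / deltaf j⌉₊ : ℝ) := Nat.le_ceil _
  have h2 : (⌈C / deltaf j⌉₊ : ℝ) ≤ (n₀ : ℝ) := by
    exact_mod_cast le_max_right 1 ⌈C / deltaf j⌉₊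
  have hd := deltaf_pos j
  calc C = (C / deltaf j) * deltaf j := by field_simp
    _ ≤ (n₀ : ℝ) * deltaf j := by nlinarith
    _ = deltaf j * n₀ := by ring

lemma configs : ∃ (n₀f : ℕ → ℕ) (Af : ℕ → Finset ℤ), (∀ i, Af i ∈ H) ∧
    ∀ i j n : ℕ, j ≤ i → n₀f j ≤ n → n ≤ i →
      (((dR hne htrans hhered) - 1/(j+1 : ℝ)) * n ≤ (rcnt (Af i) 0 (n:ℤ) : ℝ)) ∧
      (((dR hne htrans hhered) - 1/(j+1 : ℝ)) * n ≤ (rcnt (Af i) (-(n:ℤ)) 0 : ℝ)) := by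
  choose n₀f Cf hC0 hCn₀ hn₀1 hlin using params hne htrans hhered
  have main : ∀ i : ℕ, ∃ A ∈ H, ∀ j n : ℕ, j ≤ i → n₀f j ≤ n → n ≤ i →
      (((dR hne htrans hhered) - 1/(j+1 : ℝ)) * n ≤ (rcnt A 0 (n:ℤ) : ℝ)) ∧
      (((dR hne htrans hhered) - 1/(j+1 : ℝ)) * n ≤ (rcnt A (-(n:ℤ)) 0 : ℝ)) := by
    intro i
    -- choose m large
    set K : ℝ := ∑ j ∈ Finset.range (i+1), 4 * (j+1 : ℝ) * Cf j with hK
    have hK0 : 0 ≤ K := by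
      apply Finset.sum_nonneg
      intro j _
      have := hC0 j
      positivity
    obtain ⟨m, hm⟩ := exists_nat_gt (max ((2:ℝ) * K + 8 * (i+1) + 8) (2 * (i+1) + 2))
    have hm1 : (2:ℝ) * K + 8 * (i+1) + 8 < m := lt_of_le_of_lt (le_max_left _ _) hm
    have hm2 : 2 * (i+1) + 2 ≤ m := by
      have := lt_of_le_of_lt (le_max_right _ _) hm
      exact_mod_cast this.le
    -- the maximizer
    obtain ⟨E, hEH, hEsub, hEcnt, hEcard⟩ := gH_attained hne hhered m
    set μ : ℤ → ℤ → ℝ := fun a b => (rcnt E a b : ℝ) with hμ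
    have hadd : ∀ a b c : ℤ, a ≤ b → b ≤ c → μ a c = μ a b + μ b c := by
      intro a b c h1 h2
      simp only [hμ]
      exact_mod_cast rcnt_add E h1 h2
    have hup : ∀ j : ℕ, ∀ a b : ℤ, a ≤ b → μ a b ≤ ((dR hne htrans hhered) + deltaf j) * ((b:ℝ) - a) + Cf j := by
      intro j a b hab
      have h1 : rcnt E a b ≤ gH H ((b - a).toNat) := rcnt_le_gH htrans hhered hEH a b hab
      have h2 := hlin j ((b-a).toNat)
      have h3 : (((b-a).toNat : ℕ) : ℝ) = (b:ℝ) - a := by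
        have : ((b - a).toNat : ℤ) = b - a := Int.toNat_of_nonneg (by omega)
        push_cast at this ⊢
        exact_mod_cast this
      calc μ a b ≤ (gH H ((b-a).toNat) : ℝ) := by simp only [hμ]; exact_mod_cast h1
        _ ≤ ((dR hne htrans hhered) + deltaf j) * (((b-a).toNat : ℕ) : ℝ) + Cf j := h2
        _ = ((dR hne htrans hhered) + deltaf j) * ((b:ℝ) - a) + Cf j := by rw [h3]
    have htot : (dR hne htrans hhered) * m ≤ μ 0 m := by
      have := dR_mul_le hne htrans hhered m
      simp only [hμ, hEcnt]
      exact_mod_cast this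
    -- bad sets
    set badF : ℕ → Finset ℤ := fun j => (Finset.Ico (0:ℤ) (m:ℤ)).filter
      (fun c => ∃ n : ℕ, n₀f j ≤ n ∧ c + n ≤ (m:ℤ) ∧ μ c (c + n) < ((dR hne htrans hhered) - 1/(j+1:ℝ)) * n)
      with hbadF
    set badB : ℕ → Finset ℤ := fun j => (Finset.Ico (0:ℤ) (m:ℤ)).filter
      (fun c => ∃ n : ℕ, n₀f j ≤ n ∧ 0 ≤ c - n ∧ μ (c - n) c < ((dR hne htrans hhered) - 1/(j+1:ℝ)) * n)
      with hbadB
    have hcovF : ∀ j : ℕ, ((badF j).card : ℝ) ≤ 2 * (deltaf j * m + Cf j) * (j+1) := by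
      intro j
      have h := cover_lemma (dR hne htrans hhered) (1/(j+1:ℝ)) (deltaf j) (Cf j) (n₀f j) m
        (by positivity) (deltaf_pos j) (deltaf_le j) (hC0 j) (hCn₀ j) (hn₀1 j)
        μ hadd (hup j) htot
      calc ((badF j).card : ℝ) ≤ 2 * (deltaf j * m + Cf j) / (1/(j+1:ℝ)) := h
        _ = 2 * (deltaf j * m + Cf j) * (j+1) := by
            rw [div_div_eq_mul_div, div_one]  -- x / (1/y) = x * y
    have hcovB : ∀ j : ℕ, ((badB j).card : ℝ) ≤ 2 * (deltaf j * m + Cf j) * (j+1) := by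
      intro j
      set μ' : ℤ → ℤ → ℝ := fun a b => μ ((m:ℤ) - b) ((m:ℤ) - a) with hμ'
      have hadd' : ∀ a b c : ℤ, a ≤ b → b ≤ c → μ' a c = μ' a b + μ' b c := by
        intro a b c h1 h2
        simp only [hμ']
        rw [hadd ((m:ℤ) - c) ((m:ℤ) - b) ((m:ℤ) - a) (by omega) (by omega)]
        ring
      have hup' : ∀ a b : ℤ, a ≤ b → μ' a b ≤ ((dR hne htrans hhered) + deltaf j) * ((b:ℝ) - a) + Cf j := by
        intro a b hab
        have h := hup j ((m:ℤ) - b) ((m:ℤ) - a) (by omega)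
        simp only [hμ']
        have e : (((m:ℤ) - a : ℤ) : ℝ) - (((m:ℤ) - b : ℤ) : ℝ) = (b:ℝ) - a := by
          push_cast; ring
        rw [e] at h
        exact h
      have htot' : (dR hne htrans hhered) * m ≤ μ' 0 m := by
        simp only [hμ']
        have e1 : (m:ℤ) - m = 0 := by ring
        have e2 : (m:ℤ) - 0 = m := by ring
        rw [e1, e2]
        exact htot
      have h := cover_lemma (dR hne htrans hhered) (1/(j+1:ℝ)) (deltaf j) (Cf j) (n₀f j) m
        (by positivity) (deltaf_pos j) (deltaf_le j) (hC0 j) (hCn₀ j) (hn₀1 j)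
        μ' hadd' hup' htot'
      have hconv : 2 * (deltaf j * (m:ℝ) + Cf j) / (1/(j+1:ℝ)) = 2 * (deltaf j * m + Cf j) * (j+1) := by
        rw [div_div_eq_mul_div, div_one]
      rw [hconv] at h
      refine le_trans ?_ h
      have hcard : (badB j).card ≤ ((Finset.Ico (0:ℤ) (m:ℤ)).filter
          (fun c => ∃ n : ℕ, n₀f j ≤ n ∧ c + n ≤ (m:ℤ) ∧ μ' c (c + n) < ((dR hne htrans hhered) - 1/(j+1:ℝ)) * n)).card := by
        apply Finset.card_le_card_of_injOn (fun c => (m:ℤ) - c)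
        · intro c hc
          simp only [hbadB] at hc; rw [Finset.mem_coe, Finset.mem_filter, Finset.mem_Ico] at hc
          obtain ⟨⟨hc0, hcm⟩, n, hn1, hn2, hn3⟩ := hc
          have hn₀pos : 1 ≤ n₀f j := hn₀1 j
          have hnc : (n:ℤ) ≤ c := by omega
          have hcpos : (0:ℤ) < c := by
            have : 1 ≤ n := le_trans hn₀pos hn1
            omega
          rw [Finset.mem_coe, Finset.mem_filter, Finset.mem_Ico]; beta_reduce
          refine ⟨⟨by omega, by omega⟩, n, hn1, by omega, ?_⟩
          simp only [hμ']
          have e1 : (m:ℤ) - ((m:ℤ) - c + n) = c - n := by ring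
          have e2 : (m:ℤ) - ((m:ℤ) - c) = c := by ring
          rw [e1, e2]
          exact hn3
        · intro x _ y _ hxy
          have hxy' : (m:ℤ) - x = (m:ℤ) - y := hxy
          omega
      exact_mod_cast hcard
    -- total bad cardinality
    set bads : Finset ℤ := (Finset.range (i+1)).biUnion (fun j => badF j ∪ badB j) with hbads
    have hdelta4 : ∀ j : ℕ, 4 * (j+1:ℝ) * deltaf j = (1/2:ℝ)^(j+2) := by
      intro j
      unfold deltaf
      have h2 : (2:ℝ)^(j+4) = 2^(j+2) * 4 := by
        rw [show j+4 = (j+2)+2 from by omega, pow_add]; norm_num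
      rw [div_pow, one_pow]
      field_simp [h2]
      rw [pow_add]
      ring
    have hbadscard : (bads.card : ℝ) ≤ (m:ℝ)/2 + K := by
      have h1 : (bads.card : ℕ) ≤ ∑ j ∈ Finset.range (i+1), ((badF j ∪ badB j).card) :=
        Finset.card_biUnion_le
      have h2 : ∀ j ∈ Finset.range (i+1), (((badF j ∪ badB j).card : ℕ) : ℝ) ≤
          4 * (j+1:ℝ) * deltaf j * m + 4 * (j+1:ℝ) * Cf j := by
        intro j _
        have hu : ((badF j ∪ badB j).card : ℕ) ≤ (badF j).card + (badB j).card :=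
          Finset.card_union_le _ _
        have huR : (((badF j ∪ badB j).card : ℕ) : ℝ) ≤ ((badF j).card : ℝ) + ((badB j).card : ℝ) := by
          exact_mod_cast hu
        have := hcovF j
        have := hcovB j
        have hm0 : (0:ℝ) ≤ m := Nat.cast_nonneg _
        nlinarith [deltaf_pos j, hC0 j, Nat.cast_nonneg (α := ℝ) j]
      calc (bads.card : ℝ) ≤ ∑ j ∈ Finset.range (i+1), (((badF j ∪ badB j).card : ℕ) : ℝ) := by
            exact_mod_cast h1
        _ ≤ ∑ j ∈ Finset.range (i+1), (4 * (j+1:ℝ) * deltaf j * m + 4 * (j+1:ℝ) * Cf j) :=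
            Finset.sum_le_sum h2
        _ = (∑ j ∈ Finset.range (i+1), 4 * (j+1:ℝ) * deltaf j * m) + K := by
            rw [hK, ← Finset.sum_add_distrib]
        _ ≤ (m:ℝ)/2 + K := by
            have : (∑ j ∈ Finset.range (i+1), 4 * (j+1:ℝ) * deltaf j * m) ≤ (m:ℝ)/2 := by
              have he : ∀ j ∈ Finset.range (i+1), 4 * (j+1:ℝ) * deltaf j * m = (m:ℝ) * ((1/4) * (1/2:ℝ)^j) := by
                intro j _
                rw [hdelta4 j]
                rw [pow_add]
                ring
              rw [Finset.sum_congr rfl he, ← Finset.mul_sum]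
              have hgeo : ∑ j ∈ Finset.range (i+1), ((1:ℝ)/4 * (1/2:ℝ)^j) ≤ 1/2 := by
                rw [← Finset.mul_sum]
                have := sum_geometric_two_le (i+1)
                nlinarith
              have hm0 : (0:ℝ) ≤ m := Nat.cast_nonneg _
              nlinarith
            linarith
    -- find a good center
    have hgood : ∃ c ∈ Finset.Ico ((i:ℤ)+1) ((m:ℤ) - (i+1)), c ∉ bads := by
      by_contra hcon
      push_neg at hcon
      have hsub : Finset.Ico ((i:ℤ)+1) ((m:ℤ) - (i+1)) ⊆ bads := hcon
      have hle := Finset.card_le_card hsub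
      have hIco : ((Finset.Ico ((i:ℤ)+1) ((m:ℤ) - (i+1))).card : ℝ) = (m:ℝ) - 2*(i+1) := by
        rw [Int.card_Ico]
        have h1 : ((m:ℤ) - (i+1) - ((i:ℤ)+1)) = ((m - (2*i+2) : ℕ) : ℤ) := by omega
        rw [h1, Int.toNat_natCast]
        have hm2' : 2*i+2 ≤ m := by omega
        push_cast [Nat.cast_sub hm2']
        ring
      have hleR : ((Finset.Ico ((i:ℤ)+1) ((m:ℤ) - (i+1))).card : ℝ) ≤ (bads.card : ℝ) := by
        exact_mod_cast hle
      rw [hIco] at hleR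
      linarith
    obtain ⟨c, hcIco, hcbad⟩ := hgood
    rw [Finset.mem_Ico] at hcIco
    have hci1 : (i:ℤ) + 1 ≤ c := hcIco.1
    have hci2 : c < (m:ℤ) - (i+1) := hcIco.2
    refine ⟨E.image (· + (-c)), htrans E hEH (-c), ?_⟩
    intro j n hji hn₀n hni
    have hjmem : j ∈ Finset.range (i+1) := Finset.mem_range.mpr (by omega)
    have hcF : c ∉ badF j := fun h =>
      hcbad (Finset.mem_biUnion.mpr ⟨j, hjmem, Finset.mem_union_left _ h⟩)
    have hcB : c ∉ badB j := fun h =>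
      hcbad (Finset.mem_biUnion.mpr ⟨j, hjmem, Finset.mem_union_right _ h⟩)
    have hniZ : (n:ℤ) ≤ i := by exact_mod_cast hni
    constructor
    · rw [rcnt_translate]
      have e1 : (0:ℤ) - (-c) = c := by ring
      have e2 : ((n:ℤ)) - (-c) = c + n := by ring
      rw [e1, e2]
      by_contra hlt
      push_neg at hlt
      apply hcF
      simp only [hbadF, Finset.mem_filter, Finset.mem_Ico]
      exact ⟨⟨by omega, by omega⟩, n, hn₀n, by omega, by simp only [hμ]; exact hlt⟩
    · rw [rcnt_translate]
      have e1 : -(n:ℤ) - (-c) = c - n := by ring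
      have e2 : (0:ℤ) - (-c) = c := by ring
      rw [e1, e2]
      by_contra hlt
      push_neg at hlt
      apply hcB
      simp only [hbadB, Finset.mem_filter, Finset.mem_Ico]
      refine ⟨⟨by omega, by omega⟩, n, hn₀n, by omega, by simp only [hμ]; exact hlt⟩
  choose Af hAfH hAf using main
  exact ⟨n₀f, Af, hAfH, fun i j n hji h1 h2 => hAf i j n hji h1 h2⟩

-- (a) the |k| ≤ n filter count is an rcnt
omit hne htrans hhered in
lemma abs_filter_eq_rcnt (A : Finset ℤ) (n : ℕ) :
    (A.filter fun k : ℤ => |k| ≤ (n : ℤ)).card = rcnt A (-(n:ℤ)-1) n := by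
  unfold rcnt
  congr 1
  apply Finset.filter_congr
  intro k _
  rw [abs_le]
  constructor
  · intro h; exact ⟨by omega, h.2⟩
  · intro h; exact ⟨by omega, h.2⟩

-- (b) sSup identification
lemma sSup_eq_gH (n : ℕ) :
    sSup {x : ℝ | ∃ A ∈ H, x = ((A.filter fun k : ℤ => |k| ≤ (n : ℤ)).card : ℝ)}
      = (gH H (2*n+1) : ℝ) := by
  apply IsGreatest.csSup_eq
  constructor
  · obtain ⟨E, hEH, hEsub, hEcnt, _⟩ := gH_attained hne hhered (2*n+1)
    refine ⟨E.image (· + (-((n:ℤ)+1))), htrans E hEH _, ?_⟩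
    rw [abs_filter_eq_rcnt, rcnt_translate]
    have e1 : -(n:ℤ)-1 - (-((n:ℤ)+1)) = 0 := by ring
    have e2 : (n:ℤ) - (-((n:ℤ)+1)) = ((2*n+1 : ℕ) : ℤ) := by push_cast; ring
    rw [e1, e2, hEcnt]
  · rintro x ⟨A, hA, rfl⟩
    rw [abs_filter_eq_rcnt]
    have h := rcnt_le_gH htrans hhered hA (-(n:ℤ)-1) (n:ℤ) (by omega)
    have e : ((n:ℤ) - (-(n:ℤ)-1)).toNat = 2*n+1 := by omega
    rw [e] at h
    exact_mod_cast h

-- (c) tendsto of window max over 2n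
lemma tendsto_g2n :
    Tendsto (fun n : ℕ => (gH H (2*n+1) : ℝ) / (2*(n:ℝ))) atTop (nhds (dR hne htrans hhered)) := by
  have h2 : Tendsto (fun n : ℕ => 2*n+1) atTop atTop := by
    apply tendsto_atTop_atTop_of_monotone
    · intro a b hab
      show 2*a+1 ≤ 2*b+1
      omega
    · intro b
      exact ⟨b, by show b ≤ 2*b+1; omega⟩
  have h3 : Tendsto (fun n : ℕ => (gH H (2*n+1) : ℝ) / ((2*n+1 : ℕ) : ℝ)) atTop (nhds (dR hne htrans hhered)) :=
    (tendsto_dR hne htrans hhered).comp h2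
  have h4 : Tendsto (fun n : ℕ => ((2*n+1 : ℕ) : ℝ) / (2*(n:ℝ))) atTop (nhds 1) := by
    have hq : Tendsto (fun n : ℕ => 1 + (1:ℝ)/(2*n)) atTop (nhds 1) := by
      have hx : Tendsto (fun n : ℕ => 2*(n:ℝ)) atTop atTop :=
        (tendsto_natCast_atTop_atTop (R := ℝ)).const_mul_atTop (by norm_num)
      have : Tendsto (fun n : ℕ => (1:ℝ)/(2*n)) atTop (nhds 0) := by
        have h5 := (tendsto_inv_atTop_zero (𝕜 := ℝ)).comp hx
        apply h5.congr
        intro n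
        simp [Function.comp, one_div, mul_comm]
      simpa using tendsto_const_nhds.add this
    apply hq.congr'
    filter_upwards [eventually_ge_atTop 1] with n hn
    have hn' : (0:ℝ) < 2*(n:ℝ) := by positivity
    push_cast
    field_simp
  have := h3.mul h4
  rw [mul_one] at this
  apply this.congr'
  filter_upwards [eventually_ge_atTop 1] with n hn
  have hn0 : ((2*n+1 : ℕ) : ℝ) ≠ 0 := by positivity
  field_simp

end c

end RuzsaAux

/-- Ruzsa's theorem: if `H` is a nonempty family of finite subsets of
`ℤ` closed under translations and under taking subsets, then
`d(H) = lim_n max_{A∈H}|A∩[-n,n]|/(2n)` exists and there is `Γ ⊆ ℤ` with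
`lim_n |Γ∩[-n,n]|/(2n) = d(H)` all of whose finite subsets belong to `H`. -/
theorem stmt_12 (H : Set (Finset ℤ)) (hne : H.Nonempty)
    (htrans : ∀ A ∈ H, ∀ t : ℤ, A.image (· + t) ∈ H)
    (hhered : ∀ A ∈ H, ∀ B ⊆ A, B ∈ H) :
    ∃ dH : ℝ,
      Tendsto (fun n : ℕ =>
          sSup {x : ℝ | ∃ A ∈ H, x = ((A.filter fun k : ℤ => |k| ≤ (n : ℤ)).card : ℝ)} /
            (2 * n))
        atTop (nhds dH) ∧
      ∃ Γ : Set ℤ,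
        Tendsto (fun n : ℕ =>
            (Nat.card {k : ℤ | k ∈ Γ ∧ |k| ≤ (n : ℤ)} : ℝ) / (2 * n)) atTop (nhds dH) ∧
        ∀ F : Finset ℤ, ↑F ⊆ Γ → F ∈ H := by
  classical
  refine ⟨(dR hne htrans hhered), ?_, ?_⟩
  · apply (tendsto_g2n hne htrans hhered).congr
    intro n
    rw [sSup_eq_gH hne htrans hhered n]
  · obtain ⟨n₀f, Af, hAfH, hAf⟩ := configs hne htrans hhered
    set U : Ultrafilter ℕ := Ultrafilter.of atTop with hU
    have hUle : (U : Filter ℕ) ≤ atTop := Ultrafilter.of_le atTop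
    set Γ : Set ℤ := {k | {i : ℕ | k ∈ Af i} ∈ U} with hΓ
    have hagree : ∀ W : Finset ℤ, ∀ᶠ i in (U : Filter ℕ), ∀ k ∈ W, (k ∈ Af i ↔ k ∈ Γ) := by
      intro W
      induction W using Finset.induction_on with
      | empty => simp
      | @insert a W ha IH =>
        have h_a : ∀ᶠ i in (U : Filter ℕ), (a ∈ Af i ↔ a ∈ Γ) := by
          by_cases hmem : a ∈ Γ
          · have hm : {i : ℕ | a ∈ Af i} ∈ U := hmem
            filter_upwards [hm] with i hi
            exact ⟨fun _ => hmem, fun _ => hi⟩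
          · have hnot : {i : ℕ | a ∈ Af i} ∉ U := hmem
            have hc : {i : ℕ | a ∈ Af i}ᶜ ∈ U := (Ultrafilter.compl_mem_iff_notMem).mpr hnot
            filter_upwards [hc] with i hi
            simp only [Set.mem_compl_iff, Set.mem_setOf_eq] at hi
            exact ⟨fun h => absurd h hi, fun h => absurd h hmem⟩
        filter_upwards [h_a, IH] with i h1 h2
        intro k hk
        rcases Finset.mem_insert.mp hk with rfl | hk'
        · exact h1
        · exact h2 k hk'
    have hfin : ∀ F : Finset ℤ, ↑F ⊆ Γ → F ∈ H := by
      intro F hF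
      obtain ⟨i, hi⟩ := (hagree F).exists
      exact hhered (Af i) (hAfH i) F (fun k hk => (hi k hk).mpr (hF (Finset.mem_coe.mpr hk)))
    set P : ℕ → Finset ℤ := fun n => (Finset.Icc (-(n:ℤ)) (n:ℤ)).filter (· ∈ Γ) with hP
    have hPmem : ∀ n : ℕ, ∀ k : ℤ, k ∈ P n ↔ (-(n:ℤ) ≤ k ∧ k ≤ n ∧ k ∈ Γ) := by
      intro n k
      simp only [hP, Finset.mem_filter, Finset.mem_Icc]
      tauto
    have hPH : ∀ n, P n ∈ H := by
      intro n
      apply hfin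
      intro k hk
      exact ((hPmem n k).mp (Finset.mem_coe.mp hk)).2.2
    have hPcard : ∀ n : ℕ, (Nat.card {k : ℤ | k ∈ Γ ∧ |k| ≤ (n:ℤ)} : ℝ) = ((P n).card : ℝ) := by
      intro n
      have hset : {k : ℤ | k ∈ Γ ∧ |k| ≤ (n:ℤ)} = ↑(P n) := by
        ext k
        simp only [Set.mem_setOf_eq, Finset.coe_filter, hP, Finset.mem_Icc, abs_le]
        constructor
        · rintro ⟨h1, h2, h3⟩; exact ⟨⟨by omega, by omega⟩, h1⟩
        · rintro ⟨⟨h2, h3⟩, h1⟩; exact ⟨h1, by omega, by omega⟩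
      rw [hset, Nat.card_coe_set_eq, Set.ncard_coe_finset]
    have hupper : ∀ n : ℕ, ((P n).card : ℝ) ≤ (gH H (2*n+1) : ℝ) := by
      intro n
      have h1 : rcnt (P n) (-(n:ℤ)-1) (n:ℤ) = (P n).card := by
        unfold rcnt
        rw [Finset.filter_true_of_mem]
        intro k hk
        have := (hPmem n k).mp hk
        omega
      have h2 := rcnt_le_gH htrans hhered (hPH n) (-(n:ℤ)-1) (n:ℤ) (by omega)
      have e : ((n:ℤ) - (-(n:ℤ)-1)).toNat = 2*n+1 := by omega
      rw [e, h1] at h2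
      exact_mod_cast h2
    have hcard2n : ∀ n : ℕ, ((P n).card : ℝ) ≤ 2*n+1 := by
      intro n
      have h1 : (P n).card ≤ (Finset.Icc (-(n:ℤ)) (n:ℤ)).card :=
        Finset.card_le_card (Finset.filter_subset _ _)
      have h2 : (Finset.Icc (-(n:ℤ)) (n:ℤ)).card = 2*n+1 := by
        rw [Int.card_Icc]
        omega
      rw [h2] at h1
      exact_mod_cast h1
    have hlower : ∀ j n : ℕ, n₀f j ≤ n → 1 ≤ n →
        2*((dR hne htrans hhered) - 1/(j+1:ℝ))*n ≤ ((P n).card : ℝ) := by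
      intro j n hn₀ hn1
      have hUi : {i : ℕ | max j n ≤ i} ∈ (U : Filter ℕ) := hUle (mem_atTop _)
      have hUi' : ∀ᶠ i in (U : Filter ℕ), max j n ≤ i := hUi
      obtain ⟨i, hiag, hige⟩ := ((hagree (Finset.Icc (-(n:ℤ)) (n:ℤ))).and hUi').exists
      have hji : j ≤ i := le_trans (le_max_left _ _) hige
      have hni : n ≤ i := le_trans (le_max_right _ _) hige
      have hfwd : rcnt (P n) 0 (n:ℤ) = rcnt (Af i) 0 (n:ℤ) := by
        unfold rcnt
        congr 1
        ext k
        simp only [Finset.mem_filter]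
        constructor
        · rintro ⟨hkP, hw⟩
          have hk' := (hPmem n k).mp hkP
          exact ⟨(hiag k (Finset.mem_Icc.mpr ⟨by omega, by omega⟩)).mpr hk'.2.2, hw⟩
        · rintro ⟨hkA, hw⟩
          refine ⟨(hPmem n k).mpr ⟨by omega, by omega, ?_⟩, hw⟩
          exact (hiag k (Finset.mem_Icc.mpr ⟨by omega, by omega⟩)).mp hkA
      have hbwd : rcnt (P n) (-(n:ℤ)) 0 = rcnt (Af i) (-(n:ℤ)) 0 := by
        unfold rcnt
        congr 1
        ext k
        simp only [Finset.mem_filter]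
        constructor
        · rintro ⟨hkP, hw⟩
          have hk' := (hPmem n k).mp hkP
          exact ⟨(hiag k (Finset.mem_Icc.mpr ⟨by omega, by omega⟩)).mpr hk'.2.2, hw⟩
        · rintro ⟨hkA, hw⟩
          refine ⟨(hPmem n k).mpr ⟨by omega, by omega, ?_⟩, hw⟩
          exact (hiag k (Finset.mem_Icc.mpr ⟨by omega, by omega⟩)).mp hkA
      obtain ⟨hf, hb⟩ := hAf i j n hji hn₀ hni
      have hsum : rcnt (P n) (-(n:ℤ)) (n:ℤ) = rcnt (P n) (-(n:ℤ)) 0 + rcnt (P n) 0 (n:ℤ) :=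
        rcnt_add _ (by omega) (by omega)
      have hle : rcnt (P n) (-(n:ℤ)) (n:ℤ) ≤ (P n).card := rcnt_le_card _ _ _
      have hcast : (rcnt (P n) (-(n:ℤ)) 0 : ℝ) + (rcnt (P n) 0 (n:ℤ) : ℝ) ≤ ((P n).card : ℝ) := by
        rw [← Nat.cast_add]
        exact_mod_cast (hsum ▸ hle)
      rw [hbwd, hfwd] at hcast
      calc 2*((dR hne htrans hhered) - 1/(j+1:ℝ))*n = ((dR hne htrans hhered) - 1/(j+1:ℝ))*n + ((dR hne htrans hhered) - 1/(j+1:ℝ))*n := by ring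
        _ ≤ (rcnt (Af i) (-(n:ℤ)) 0 : ℝ) + (rcnt (Af i) 0 (n:ℤ) : ℝ) := add_le_add hb hf
        _ ≤ ((P n).card : ℝ) := hcast
    refine ⟨Γ, ?_, hfin⟩
    have hEq : (fun n : ℕ => (Nat.card {k : ℤ | k ∈ Γ ∧ |k| ≤ (n:ℤ)} : ℝ) / (2*(n:ℝ)))
        = (fun n : ℕ => ((P n).card : ℝ) / (2*(n:ℝ))) := by
      funext n; rw [hPcard n]
    rw [hEq]
    set u : ℕ → ℝ := fun n => ((P n).card : ℝ) / (2*(n:ℝ)) with hu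
    have hg2 := tendsto_g2n hne htrans hhered
    have hub : ∀ᶠ n in atTop, u n ≤ (gH H (2*n+1) : ℝ)/(2*(n:ℝ)) := by
      filter_upwards [eventually_ge_atTop 1] with n hn
      have h2 : (0:ℝ) < 2*(n:ℝ) := by
        have : (1:ℝ) ≤ n := by exact_mod_cast hn
        linarith
      rw [hu, div_le_div_iff_of_pos_right h2]
      exact hupper n
    have hb0 : ∀ᶠ n in atTop, (0:ℝ) ≤ u n := Eventually.of_forall fun n => by positivity
    have hb2 : ∀ᶠ n in atTop, u n ≤ 2 := by
      filter_upwards [eventually_ge_atTop 1] with n hn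
      have hnR : (1:ℝ) ≤ n := by exact_mod_cast hn
      have h2 : (0:ℝ) < 2*(n:ℝ) := by linarith
      rw [hu, div_le_iff₀ h2]
      have := hcard2n n
      nlinarith
    have hbddabove : IsBoundedUnder (· ≤ ·) atTop u := ⟨2, by simpa [eventually_map] using hb2⟩
    have hbddbelow : IsBoundedUnder (· ≥ ·) atTop u := ⟨0, by simpa [eventually_map] using hb0⟩
    have hlimsup : limsup u atTop ≤ (dR hne htrans hhered) := by
      have h1 : limsup u atTop ≤ limsup (fun n : ℕ => (gH H (2*n+1):ℝ)/(2*(n:ℝ))) atTop :=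
        limsup_le_limsup hub (hbddbelow.isCoboundedUnder_le) (hg2.isBoundedUnder_le)
      rwa [hg2.limsup_eq] at h1
    have hliminf : (dR hne htrans hhered) ≤ liminf u atTop := by
      have hstep : ∀ j : ℕ, (dR hne htrans hhered) - 1/(j+1:ℝ) ≤ liminf u atTop := by
        intro j
        apply le_liminf_of_le (hbddabove.isCoboundedUnder_ge)
        filter_upwards [eventually_ge_atTop (max (n₀f j) 1)] with n hn
        have h1 := hlower j n (le_trans (le_max_left _ _) hn) (le_trans (le_max_right _ _) hn)
        have hn1 : 1 ≤ n := le_trans (le_max_right _ _) hn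
        have h2 : (0:ℝ) < 2*(n:ℝ) := by
          have : (1:ℝ) ≤ n := by exact_mod_cast hn1
          linarith
        rw [hu, le_div_iff₀ h2]
        calc ((dR hne htrans hhered) - 1/(j+1:ℝ)) * (2*(n:ℝ)) = 2*((dR hne htrans hhered) - 1/(j+1:ℝ))*n := by ring
          _ ≤ _ := h1
      have hlim : Tendsto (fun j : ℕ => (dR hne htrans hhered) - 1/(j+1:ℝ)) atTop (nhds (dR hne htrans hhered)) := by
        have h0 := tendsto_one_div_add_atTop_nhds_zero_nat (𝕜 := ℝ)
        simpa using tendsto_const_nhds.sub h0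
      exact le_of_tendsto' hlim hstep
    exact tendsto_of_le_liminf_of_limsup_le hliminf hlimsup hbddabove hbddbelow
end
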